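/- arXiv:0812.3318 — 11 statements merged into one kernel-verified Lean document; each statement's English description precedes it below -/
import Mathlib

section
/- For positive real parameters b₁, c₁, h₁, b₂, c₂, h₂, the map T(x,y) = (b₁·x/(1+x+c₁·y) + h₁, b₂·y/(1+y+c₂·x) + h₂) is injective on [0,∞)×[0,∞). -/
open Set in
/-- The map `T(x,y) = (b₁x/(1+x+c₁y)+h₁, b₂y/(1+y+c₂x)+h₂)` is injective
on `[0,∞)×[0,∞)`. -/
theorem stmt4 (b₁ c₁ h₁ b₂ c₂ h₂ : ℝ)
    (hb₁ : 0 < b₁) (hc₁ : 0 < c₁) (hh₁ : 0 < h₁)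
    (hb₂ : 0 < b₂) (hc₂ : 0 < c₂) (hh₂ : 0 < h₂)
    (T : ℝ × ℝ → ℝ × ℝ)
    (hT : ∀ x y, T (x, y) =
      (b₁ * x / (1 + x + c₁ * y) + h₁, b₂ * y / (1 + y + c₂ * x) + h₂)) :
    Set.InjOn T (Ici 0 ×ˢ Ici 0) := by
  rintro ⟨x, y⟩ ⟨hx, hy⟩ ⟨x', y'⟩ ⟨hx', hy'⟩ heq
  simp only [Set.mem_Ici] at hx hy hx' hy'
  rw [hT, hT] at heq
  have hA : (0:ℝ) < 1 + x + c₁ * y := by positivity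
  have hA' : (0:ℝ) < 1 + x' + c₁ * y' := by positivity
  have hB : (0:ℝ) < 1 + y + c₂ * x := by positivity
  have hB' : (0:ℝ) < 1 + y' + c₂ * x' := by positivity
  have h1 : b₁ * x / (1 + x + c₁ * y) = b₁ * x' / (1 + x' + c₁ * y') := by
    have := congrArg Prod.fst heq; simpa using this
  have h2 : b₂ * y / (1 + y + c₂ * x) = b₂ * y' / (1 + y' + c₂ * x') := by
    have := congrArg Prod.snd heq; simpa using this
  rw [div_eq_div_iff hA.ne' hA'.ne'] at h1
  rw [div_eq_div_iff hB.ne' hB'.ne'] at h2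
  have e1 : x - x' = -c₁ * (x * y' - x' * y) := by
    have h : b₁ * (x - x' + c₁ * (x * y' - x' * y)) = b₁ * 0 := by
      ring_nf; ring_nf at h1; linarith
    have := mul_left_cancel₀ hb₁.ne' h
    linarith
  have e2 : y - y' = c₂ * (x * y' - x' * y) := by
    have h : b₂ * (y - y' - c₂ * (x * y' - x' * y)) = b₂ * 0 := by
      ring_nf; ring_nf at h2; linarith
    have := mul_left_cancel₀ hb₂.ne' h
    linarith
  have hD : x * y' - x' * y = 0 := by
    rcases lt_trichotomy (x * y' - x' * y) 0 with h | h | h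
    · exfalso
      have hxx : x' < x := by nlinarith
      have hyy : y < y' := by nlinarith
      nlinarith
    · exact h
    · exfalso
      have hxx : x < x' := by nlinarith
      have hyy : y' < y := by nlinarith
      nlinarith
  have hxe : x = x' := by rw [hD] at e1; linarith [e1]
  have hye : y = y' := by rw [hD] at e2; linarith [e2]
  simp [hxe, hye]
end

section
/- For positive real parameters b₁, c₁, h₁, b₂, c₂, h₂, define T on [0,∞)×[0,∞) by T(x,y) = (b₁·x/(1+x+c₁·y) + h₁, b₂·y/(1+y+c₂·x) + h₂). Then for every (x₀,y₀) ∈ [0,∞)×[0,∞) there exists a point (x̄,ȳ) ∈ [0,∞)×[0,∞) with T(x̄,ȳ) = (x̄,ȳ) such that the sequence of iterates Tⁿ(x₀,y₀) converges to (x̄,ȳ) as n → ∞. -/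
open Set Filter

lemma stmt6_key (b c x y x' y' : ℝ) (hb : 0 < b) (hd : 0 < 1 + x + c*y) (hd' : 0 < 1 + x' + c*y') :
    b*x/(1+x+c*y) ≤ b*x'/(1+x'+c*y') ↔ 0 ≤ (x' - x) + c*(x'*y - x*y') := by
  rw [div_le_div_iff₀ hd hd']
  constructor
  · intro h
    by_contra hA
    push_neg at hA
    nlinarith
  · intro h
    nlinarith [mul_nonneg hb.le h]

lemma stmt6_conv (f : ℕ → ℝ) (lo hi : ℝ) (h1 : ∀ n, lo ≤ f n) (h2 : ∀ n, f n ≤ hi)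
    (N : ℕ) (h : (∀ n, N ≤ n → f n ≤ f (n+1)) ∨ (∀ n, N ≤ n → f (n+1) ≤ f n)) :
    ∃ l, Filter.Tendsto f Filter.atTop (nhds l) := by
  rcases h with h | h
  · have hm : Monotone (fun n => f (n + N)) := monotone_nat_of_le_succ (fun n => by
      have h' := h (n + N) (Nat.le_add_left _ _)
      have e : n + 1 + N = (n + N) + 1 := by omega
      simpa [e] using h')
    have hb : BddAbove (Set.range fun n => f (n + N)) := ⟨hi, by rintro x ⟨n, rfl⟩; exact h2 _⟩
    exact ⟨_, (Filter.tendsto_add_atTop_iff_nat N).mp (tendsto_atTop_ciSup hm hb)⟩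
  · have hm : Antitone (fun n => f (n + N)) := antitone_nat_of_succ_le (fun n => by
      have h' := h (n + N) (Nat.le_add_left _ _)
      have e : n + 1 + N = (n + N) + 1 := by omega
      simpa [e] using h')
    have hb : BddBelow (Set.range fun n => f (n + N)) := ⟨lo, by rintro x ⟨n, rfl⟩; exact h1 _⟩
    exact ⟨_, (Filter.tendsto_add_atTop_iff_nat N).mp (tendsto_atTop_ciInf hm hb)⟩

open Set Filter in
/-- Every orbit of the map `T(x,y) = (b₁x/(1+x+c₁y)+h₁, b₂y/(1+y+c₂x)+h₂)`
starting in `[0,∞)×[0,∞)` converges to a fixed point of `T`. -/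
theorem stmt6 (b₁ c₁ h₁ b₂ c₂ h₂ : ℝ)
    (hb₁ : 0 < b₁) (hc₁ : 0 < c₁) (hh₁ : 0 < h₁)
    (hb₂ : 0 < b₂) (hc₂ : 0 < c₂) (hh₂ : 0 < h₂)
    (T : ℝ × ℝ → ℝ × ℝ)
    (hT : ∀ x y, T (x, y) =
      (b₁ * x / (1 + x + c₁ * y) + h₁, b₂ * y / (1 + y + c₂ * x) + h₂)) :
    ∀ p ∈ Ici (0:ℝ) ×ˢ Ici (0:ℝ), ∃ q ∈ Ici (0:ℝ) ×ˢ Ici (0:ℝ),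
      T q = q ∧ Tendsto (fun n => T^[n] p) atTop (nhds q) := by
  have hTq : ∀ q : ℝ × ℝ,
      T q = (b₁ * q.1 / (1 + q.1 + c₁ * q.2) + h₁, b₂ * q.2 / (1 + q.2 + c₂ * q.1) + h₂) := by
    intro q
    have := hT q.1 q.2
    rwa [Prod.mk.eta] at this
  intro p hp
  set X : ℕ → ℝ := fun n => (T^[n] p).1 with hXdef
  set Y : ℕ → ℝ := fun n => (T^[n] p).2 with hYdef
  have hrecX : ∀ n, X (n+1) = b₁ * X n / (1 + X n + c₁ * Y n) + h₁ := by
    intro n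
    show (T^[n+1] p).1 = _
    rw [Function.iterate_succ_apply', hTq]
  have hrecY : ∀ n, Y (n+1) = b₂ * Y n / (1 + Y n + c₂ * X n) + h₂ := by
    intro n
    show (T^[n+1] p).2 = _
    rw [Function.iterate_succ_apply', hTq]
  -- nonnegativity
  have hnn : ∀ n, 0 ≤ X n ∧ 0 ≤ Y n := by
    intro n
    induction n with
    | zero => exact ⟨hp.1, hp.2⟩
    | succ n ih =>
      have hd : (0:ℝ) < 1 + X n + c₁ * Y n := by nlinarith [mul_nonneg hc₁.le ih.2]
      have he : (0:ℝ) < 1 + Y n + c₂ * X n := by nlinarith [mul_nonneg hc₂.le ih.1]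
      constructor
      · rw [hrecX]
        have := div_nonneg (mul_nonneg hb₁.le ih.1) hd.le
        linarith
      · rw [hrecY]
        have := div_nonneg (mul_nonneg hb₂.le ih.2) he.le
        linarith
  have hX0 : ∀ n, 0 ≤ X n := fun n => (hnn n).1
  have hY0 : ∀ n, 0 ≤ Y n := fun n => (hnn n).2
  have hd : ∀ n, (0:ℝ) < 1 + X n + c₁ * Y n := by
    intro n; nlinarith [mul_nonneg hc₁.le (hY0 n), hX0 n]
  have he : ∀ n, (0:ℝ) < 1 + Y n + c₂ * X n := by
    intro n; nlinarith [mul_nonneg hc₂.le (hX0 n), hY0 n]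
  -- upper bounds
  have hXub : ∀ n, X n ≤ max (X 0) (b₁ + h₁) := by
    intro n
    cases n with
    | zero => exact le_max_left _ _
    | succ n =>
      refine le_trans ?_ (le_max_right _ _)
      rw [hrecX]
      have : b₁ * X n / (1 + X n + c₁ * Y n) ≤ b₁ := by
        rw [div_le_iff₀ (hd n)]
        nlinarith [mul_nonneg hc₁.le (hY0 n), hX0 n, hb₁.le]
      linarith
  have hYub : ∀ n, Y n ≤ max (Y 0) (b₂ + h₂) := by
    intro n
    cases n with
    | zero => exact le_max_left _ _
    | succ n =>
      refine le_trans ?_ (le_max_right _ _)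
      rw [hrecY]
      have : b₂ * Y n / (1 + Y n + c₂ * X n) ≤ b₂ := by
        rw [div_le_iff₀ (he n)]
        nlinarith [mul_nonneg hc₂.le (hX0 n), hY0 n, hb₂.le]
      linarith
  -- comparison iffs
  have hXcmp : ∀ n, (X (n+1) ≤ X (n+2) ↔
      0 ≤ (X (n+1) - X n) + c₁*(X (n+1)*Y n - X n*Y (n+1))) := by
    intro n
    have e2 : X (n+2) = b₁ * X (n+1) / (1 + X (n+1) + c₁ * Y (n+1)) + h₁ := hrecX (n+1)
    rw [e2]
    nth_rewrite 1 [hrecX n]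
    rw [add_le_add_iff_right]
    exact stmt6_key b₁ c₁ (X n) (Y n) (X (n+1)) (Y (n+1)) hb₁ (hd n) (hd (n+1))
  have hXcmp' : ∀ n, (X (n+2) ≤ X (n+1) ↔
      0 ≤ (X n - X (n+1)) + c₁*(X n*Y (n+1) - X (n+1)*Y n)) := by
    intro n
    have e2 : X (n+2) = b₁ * X (n+1) / (1 + X (n+1) + c₁ * Y (n+1)) + h₁ := hrecX (n+1)
    rw [e2]
    nth_rewrite 3 [hrecX n]
    rw [add_le_add_iff_right]
    exact stmt6_key b₁ c₁ (X (n+1)) (Y (n+1)) (X n) (Y n) hb₁ (hd (n+1)) (hd n)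
  have hYcmp : ∀ n, (Y (n+1) ≤ Y (n+2) ↔
      0 ≤ (Y (n+1) - Y n) + c₂*(Y (n+1)*X n - Y n*X (n+1))) := by
    intro n
    have e2 : Y (n+2) = b₂ * Y (n+1) / (1 + Y (n+1) + c₂ * X (n+1)) + h₂ := hrecY (n+1)
    rw [e2]
    nth_rewrite 1 [hrecY n]
    rw [add_le_add_iff_right]
    exact stmt6_key b₂ c₂ (Y n) (X n) (Y (n+1)) (X (n+1)) hb₂ (he n) (he (n+1))
  have hYcmp' : ∀ n, (Y (n+2) ≤ Y (n+1) ↔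
      0 ≤ (Y n - Y (n+1)) + c₂*(Y n*X (n+1) - Y (n+1)*X n)) := by
    intro n
    have e2 : Y (n+2) = b₂ * Y (n+1) / (1 + Y (n+1) + c₂ * X (n+1)) + h₂ := hrecY (n+1)
    rw [e2]
    nth_rewrite 3 [hrecY n]
    rw [add_le_add_iff_right]
    exact stmt6_key b₂ c₂ (Y (n+1)) (X (n+1)) (Y n) (X n) hb₂ (he (n+1)) (he n)
  -- invariance of the SE cone
  have hSEstep : ∀ n, (X n ≤ X (n+1) ∧ Y (n+1) ≤ Y n) →
      (X (n+1) ≤ X (n+2) ∧ Y (n+2) ≤ Y (n+1)) := by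
    intro n ⟨h1, h2⟩
    constructor
    · rw [hXcmp n]
      have h3 : 0 ≤ X (n+1)*Y n - X n*Y (n+1) := by
        nlinarith [mul_nonneg (hY0 n) (sub_nonneg.mpr h1),
          mul_nonneg (hX0 n) (sub_nonneg.mpr h2)]
      nlinarith [mul_nonneg hc₁.le h3]
    · rw [hYcmp' n]
      have h3 : 0 ≤ Y n*X (n+1) - Y (n+1)*X n := by
        nlinarith [mul_nonneg (hY0 n) (sub_nonneg.mpr h1),
          mul_nonneg (hX0 n) (sub_nonneg.mpr h2)]
      nlinarith [mul_nonneg hc₂.le h3]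
  -- invariance of the NW cone
  have hNWstep : ∀ n, (X (n+1) ≤ X n ∧ Y n ≤ Y (n+1)) →
      (X (n+2) ≤ X (n+1) ∧ Y (n+1) ≤ Y (n+2)) := by
    intro n ⟨h1, h2⟩
    constructor
    · rw [hXcmp' n]
      have h3 : 0 ≤ X n*Y (n+1) - X (n+1)*Y n := by
        nlinarith [mul_nonneg (hY0 n) (sub_nonneg.mpr h1),
          mul_nonneg (hX0 n) (sub_nonneg.mpr h2)]
      nlinarith [mul_nonneg hc₁.le h3]
    · rw [hYcmp n]
      have h3 : 0 ≤ Y (n+1)*X n - Y n*X (n+1) := by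
        nlinarith [mul_nonneg (hY0 n) (sub_nonneg.mpr h1),
          mul_nonneg (hX0 n) (sub_nonneg.mpr h2)]
      nlinarith [mul_nonneg hc₂.le h3]
  -- NE cannot go to strict SW
  have hNEstep : ∀ n, (X n ≤ X (n+1) ∧ Y n ≤ Y (n+1)) →
      ¬(X (n+2) < X (n+1) ∧ Y (n+2) < Y (n+1)) := by
    intro n ⟨h1, h2⟩ ⟨h3, h4⟩
    have hA1 : ¬ (0 ≤ (X (n+1) - X n) + c₁*(X (n+1)*Y n - X n*Y (n+1))) := by
      rw [← hXcmp n]; exact not_le.mpr h3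
    have hA2 : ¬ (0 ≤ (Y (n+1) - Y n) + c₂*(Y (n+1)*X n - Y n*X (n+1))) := by
      rw [← hYcmp n]; exact not_le.mpr h4
    push_neg at hA1 hA2
    have k1 := mul_neg_of_pos_of_neg hc₂ hA1
    have k2 := mul_neg_of_pos_of_neg hc₁ hA2
    have k3 : 0 ≤ c₂ * (X (n+1) - X n) := mul_nonneg hc₂.le (sub_nonneg.mpr h1)
    have k4 : 0 ≤ c₁ * (Y (n+1) - Y n) := mul_nonneg hc₁.le (sub_nonneg.mpr h2)
    nlinarith [k1, k2, k3, k4]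
  -- SW cannot go to strict NE
  have hSWstep : ∀ n, (X (n+1) ≤ X n ∧ Y (n+1) ≤ Y n) →
      ¬(X (n+1) < X (n+2) ∧ Y (n+1) < Y (n+2)) := by
    intro n ⟨h1, h2⟩ ⟨h3, h4⟩
    have hA1 : ¬ (0 ≤ (X n - X (n+1)) + c₁*(X n*Y (n+1) - X (n+1)*Y n)) := by
      rw [← hXcmp' n]; exact not_le.mpr h3
    have hA2 : ¬ (0 ≤ (Y n - Y (n+1)) + c₂*(Y n*X (n+1) - Y (n+1)*X n)) := by
      rw [← hYcmp' n]; exact not_le.mpr h4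
    push_neg at hA1 hA2
    have k1 := mul_neg_of_pos_of_neg hc₂ hA1
    have k2 := mul_neg_of_pos_of_neg hc₁ hA2
    have k3 : 0 ≤ c₂ * (X n - X (n+1)) := mul_nonneg hc₂.le (sub_nonneg.mpr h1)
    have k4 : 0 ≤ c₁ * (Y n - Y (n+1)) := mul_nonneg hc₁.le (sub_nonneg.mpr h2)
    nlinarith [k1, k2, k3, k4]
  -- eventual monotonicity
  have hmono : ∃ N, ((∀ n, N ≤ n → X n ≤ X (n+1)) ∨ (∀ n, N ≤ n → X (n+1) ≤ X n)) ∧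
      ((∀ n, N ≤ n → Y n ≤ Y (n+1)) ∨ (∀ n, N ≤ n → Y (n+1) ≤ Y n)) := by
    by_cases hSE : ∃ N, X N ≤ X (N+1) ∧ Y (N+1) ≤ Y N
    · obtain ⟨N, hN⟩ := hSE
      have hall : ∀ n, N ≤ n → (X n ≤ X (n+1) ∧ Y (n+1) ≤ Y n) := by
        intro n hn
        induction n, hn using Nat.le_induction with
        | base => exact hN
        | succ n hn ih => exact hSEstep n ih
      exact ⟨N, Or.inl (fun n hn => (hall n hn).1), Or.inr (fun n hn => (hall n hn).2)⟩
    by_cases hNW : ∃ N, X (N+1) ≤ X N ∧ Y N ≤ Y (N+1)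
    · obtain ⟨N, hN⟩ := hNW
      have hall : ∀ n, N ≤ n → (X (n+1) ≤ X n ∧ Y n ≤ Y (n+1)) := by
        intro n hn
        induction n, hn using Nat.le_induction with
        | base => exact hN
        | succ n hn ih => exact hNWstep n ih
      exact ⟨N, Or.inr (fun n hn => (hall n hn).1), Or.inl (fun n hn => (hall n hn).2)⟩
    push_neg at hSE hNW
    have hcone : ∀ n, (X n ≤ X (n+1) ∧ Y n ≤ Y (n+1)) ∨ (X (n+1) ≤ X n ∧ Y (n+1) ≤ Y n) := by
      intro n
      rcases le_total (X n) (X (n+1)) with h1 | h1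
      · rcases le_total (Y n) (Y (n+1)) with h2 | h2
        · exact Or.inl ⟨h1, h2⟩
        · exact absurd h2 (not_le.mpr (hSE n h1))
      · rcases le_total (Y n) (Y (n+1)) with h2 | h2
        · exact absurd h2 (not_le.mpr (hNW n h1))
        · exact Or.inr ⟨h1, h2⟩
    have hNE_inv : ∀ m, (X m ≤ X (m+1) ∧ Y m ≤ Y (m+1)) →
        (X (m+1) ≤ X (m+2) ∧ Y (m+1) ≤ Y (m+2)) := by
      intro m hm
      rcases hcone (m+1) with h | h
      · exact h
      · exfalso
        have hy : Y (m+2) < Y (m+1) := hNW (m+1) h.1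
        have hx : ¬ (X (m+2) < X (m+1)) := fun hx => hNEstep m hm ⟨hx, hy⟩
        push_neg at hx
        exact absurd (hSE (m+1) hx) (not_lt.mpr h.2)
    have hSW_inv : ∀ m, (X (m+1) ≤ X m ∧ Y (m+1) ≤ Y m) →
        (X (m+2) ≤ X (m+1) ∧ Y (m+2) ≤ Y (m+1)) := by
      intro m hm
      rcases hcone (m+1) with h | h
      · exfalso
        have hy : Y (m+1) < Y (m+2) := hSE (m+1) h.1
        have hx : ¬ (X (m+1) < X (m+2)) := fun hx => hSWstep m hm ⟨hx, hy⟩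
        push_neg at hx
        exact absurd (hNW (m+1) hx) (not_lt.mpr h.2)
      · exact h
    rcases hcone 0 with h0 | h0
    · have hall : ∀ m, X m ≤ X (m+1) ∧ Y m ≤ Y (m+1) := by
        intro m
        induction m with
        | zero => exact h0
        | succ m ih => exact hNE_inv m ih
      exact ⟨0, Or.inl (fun n _ => (hall n).1), Or.inl (fun n _ => (hall n).2)⟩
    · have hall : ∀ m, X (m+1) ≤ X m ∧ Y (m+1) ≤ Y m := by
        intro m
        induction m with
        | zero => exact h0
        | succ m ih => exact hSW_inv m ih
      exact ⟨0, Or.inr (fun n _ => (hall n).1), Or.inr (fun n _ => (hall n).2)⟩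
  obtain ⟨N, hXm, hYm⟩ := hmono
  obtain ⟨lx, hlx⟩ := stmt6_conv X 0 (max (X 0) (b₁+h₁)) hX0 hXub N hXm
  obtain ⟨ly, hly⟩ := stmt6_conv Y 0 (max (Y 0) (b₂+h₂)) hY0 hYub N hYm
  have hlx0 : (0:ℝ) ≤ lx := ge_of_tendsto' hlx hX0
  have hly0 : (0:ℝ) ≤ ly := ge_of_tendsto' hly hY0
  have hdl : (0:ℝ) < 1 + lx + c₁ * ly := by nlinarith [mul_nonneg hc₁.le hly0]
  have hel : (0:ℝ) < 1 + ly + c₂ * lx := by nlinarith [mul_nonneg hc₂.le hlx0]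
  have hdenx : Tendsto (fun n => 1 + X n + c₁ * Y n) atTop (nhds (1 + lx + c₁ * ly)) :=
    ((tendsto_const_nhds.add hlx).add (hly.const_mul c₁))
  have hdeny : Tendsto (fun n => 1 + Y n + c₂ * X n) atTop (nhds (1 + ly + c₂ * lx)) :=
    ((tendsto_const_nhds.add hly).add (hlx.const_mul c₂))
  have hfx : Tendsto (fun n => b₁ * X n / (1 + X n + c₁ * Y n) + h₁) atTop
      (nhds (b₁ * lx / (1 + lx + c₁ * ly) + h₁)) :=
    ((hlx.const_mul b₁).div hdenx hdl.ne').add tendsto_const_nhds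
  have hfy : Tendsto (fun n => b₂ * Y n / (1 + Y n + c₂ * X n) + h₂) atTop
      (nhds (b₂ * ly / (1 + ly + c₂ * lx) + h₂)) :=
    ((hly.const_mul b₂).div hdeny hel.ne').add tendsto_const_nhds
  have hfx' : Tendsto (fun n => X (n+1)) atTop (nhds (b₁ * lx / (1 + lx + c₁ * ly) + h₁)) := by
    have e : (fun n => X (n+1)) = fun n => b₁ * X n / (1 + X n + c₁ * Y n) + h₁ := funext hrecX
    rw [e]; exact hfx
  have hfy' : Tendsto (fun n => Y (n+1)) atTop (nhds (b₂ * ly / (1 + ly + c₂ * lx) + h₂)) := by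
    have e : (fun n => Y (n+1)) = fun n => b₂ * Y n / (1 + Y n + c₂ * X n) + h₂ := funext hrecY
    rw [e]; exact hfy
  have hx_eq : b₁ * lx / (1 + lx + c₁ * ly) + h₁ = lx :=
    tendsto_nhds_unique hfx' ((tendsto_add_atTop_iff_nat 1).mpr hlx)
  have hy_eq : b₂ * ly / (1 + ly + c₂ * lx) + h₂ = ly :=
    tendsto_nhds_unique hfy' ((tendsto_add_atTop_iff_nat 1).mpr hly)
  refine ⟨(lx, ly), ⟨hlx0, hly0⟩, ?_, ?_⟩
  · rw [hTq]
    simp only [Prod.mk.injEq]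
    exact ⟨hx_eq, hy_eq⟩
  · have e : (fun n => T^[n] p) = fun n => (X n, Y n) :=
      funext fun n => (Prod.mk.eta).symm
    rw [e]
    exact hlx.prodMk_nhds hly
end

section
/- Let b₁, c₁, h₁, b₂, c₂, h₂ be positive reals, and let C₁ = {(x,y) ∈ ℝ² : x² + c₁·x·y + (1−b₁−h₁)·x − c₁·h₁·y − h₁ = 0} and C₂ = {(x,y) ∈ ℝ² : y² + c₂·x·y + (1−b₂−h₂)·y − c₂·h₂·x − h₂ = 0}. Then: (1) if (x,y), (x′,y′) ∈ C₁ with x < x′ and either both x, x′ < h₁ or both x, x′ > h₁, then y > y′; (2) if (x,y), (x′,y′) ∈ C₂ with y < y′ and either both y, y′ < h₂ or both y, y′ > h₂, then x > x′. In other words, each branch of C₁ and of C₂ is the graph of a strictly decreasing function. -/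
lemma stmt7_key (b c h x y x' y' : ℝ) (hb : 0 < b) (hc : 0 < c) (hh : 0 < h)
    (e1 : x ^ 2 + c * x * y + (1 - b - h) * x - c * h * y - h = 0)
    (e2 : x' ^ 2 + c * x' * y' + (1 - b - h) * x' - c * h * y' - h = 0)
    (hxx : x < x') (hside : (x < h ∧ x' < h) ∨ (h < x ∧ h < x')) : y' < y := by
  have hprod : 0 < (x - h) * (x' - h) := by
    rcases hside with ⟨h1, h2⟩ | ⟨h1, h2⟩ <;> nlinarith
  have hkey : c * ((x - h) * (x' - h)) * (y - y') =
      (x' - x) * ((x - h) * (x' - h) + b * h) := by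
    linear_combination (x' - h) * e1 - (x - h) * e2
  have h2 : 0 < (x' - x) * ((x - h) * (x' - h) + b * h) := by
    have : 0 < b * h := mul_pos hb hh
    nlinarith
  nlinarith [mul_pos hc hprod]

/-- All branches of the critical curves
`C₁ = {x² + c₁xy + (1−b₁−h₁)x − c₁h₁y − h₁ = 0}` and
`C₂ = {y² + c₂xy + (1−b₂−h₂)y − c₂h₂x − h₂ = 0}` are graphs of strictly
decreasing functions: on `C₁`, on either side of the asymptote `x = h₁`,
larger `x` forces smaller `y`; on `C₂`, on either side of the asymptote
`y = h₂`, larger `y` forces smaller `x`. -/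
theorem stmt7 (b₁ c₁ h₁ b₂ c₂ h₂ : ℝ)
    (hb₁ : 0 < b₁) (hc₁ : 0 < c₁) (hh₁ : 0 < h₁)
    (hb₂ : 0 < b₂) (hc₂ : 0 < c₂) (hh₂ : 0 < h₂) :
    (∀ x y x' y' : ℝ,
      x ^ 2 + c₁ * x * y + (1 - b₁ - h₁) * x - c₁ * h₁ * y - h₁ = 0 →
      x' ^ 2 + c₁ * x' * y' + (1 - b₁ - h₁) * x' - c₁ * h₁ * y' - h₁ = 0 →
      x < x' → ((x < h₁ ∧ x' < h₁) ∨ (h₁ < x ∧ h₁ < x')) → y' < y) ∧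
    (∀ x y x' y' : ℝ,
      y ^ 2 + c₂ * x * y + (1 - b₂ - h₂) * y - c₂ * h₂ * x - h₂ = 0 →
      y' ^ 2 + c₂ * x' * y' + (1 - b₂ - h₂) * y' - c₂ * h₂ * x' - h₂ = 0 →
      y < y' → ((y < h₂ ∧ y' < h₂) ∨ (h₂ < y ∧ h₂ < y')) → x' < x) := by
  constructor
  · intro x y x' y' e1 e2 hxx hside
    exact stmt7_key b₁ c₁ h₁ x y x' y' hb₁ hc₁ hh₁ e1 e2 hxx hside
  · intro x y x' y' e1 e2 hyy hside
    exact stmt7_key b₂ c₂ h₂ y x y' x' hb₂ hc₂ hh₂ (by linarith [e1]) (by linarith [e2]) hyy hside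
end

section
/- Let b₁, c₁, h₁, b₂, c₂, h₂ be positive reals and define T on [0,∞)×[0,∞) by T(x,y) = (b₁·x/(1+x+c₁·y) + h₁, b₂·y/(1+y+c₂·x) + h₂). Then there exists a point (x̄,ȳ) with h₁ ≤ x̄ ≤ h₁ + b₁ and h₂ ≤ ȳ ≤ h₂ + b₂ such that T(x̄,ȳ) = (x̄,ȳ). In particular the quadrant Q₁(h₁,h₂) = {(x,y) : x ≥ h₁, y ≥ h₂} contains at least one equilibrium of the system (LGIN). -/
private lemma auxMono9 {b c x x' y y' : ℝ} (hb : 0 < b) (hc : 0 < c)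
    (hx0 : 0 ≤ x) (hy'0 : 0 ≤ y') (hxx : x ≤ x') (hyy : y' ≤ y)
    (h1 : 0 < 1 + x + c * y) (h2 : 0 < 1 + x' + c * y') :
    b * x / (1 + x + c * y) ≤ b * x' / (1 + x' + c * y') := by
  rw [div_le_div_iff₀ h1 h2]
  nlinarith [mul_le_mul_of_nonneg_left (mul_le_mul hxx hyy hy'0 (hx0.trans hxx)) (mul_pos hb hc).le,
    mul_le_mul_of_nonneg_left hxx hb.le]

/-- The map `T(x,y) = (b₁x/(1+x+c₁y)+h₁, b₂y/(1+y+c₂x)+h₂)` has a fixed point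
in the box `[h₁, h₁+b₁] × [h₂, h₂+b₂]`; in particular the quadrant
`Q₁(h₁,h₂)` contains at least one equilibrium. -/
theorem stmt9 (b₁ c₁ h₁ b₂ c₂ h₂ : ℝ)
    (hb₁ : 0 < b₁) (hc₁ : 0 < c₁) (hh₁ : 0 < h₁)
    (hb₂ : 0 < b₂) (hc₂ : 0 < c₂) (hh₂ : 0 < h₂)
    (T : ℝ × ℝ → ℝ × ℝ)
    (hT : ∀ x y, T (x, y) =
      (b₁ * x / (1 + x + c₁ * y) + h₁, b₂ * y / (1 + y + c₂ * x) + h₂)) :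
    ∃ xs ys : ℝ, h₁ ≤ xs ∧ xs ≤ h₁ + b₁ ∧ h₂ ≤ ys ∧ ys ≤ h₂ + b₂ ∧
      T (xs, ys) = (xs, ys) := by
  haveI f1 : Fact (h₁ ≤ h₁ + b₁) := ⟨by linarith⟩
  haveI f2 : Fact (h₂ ≤ h₂ + b₂) := ⟨by linarith⟩
  have mem1 : ∀ x y : ℝ, h₁ ≤ x → h₂ ≤ y →
      b₁ * x / (1 + x + c₁ * y) + h₁ ∈ Set.Icc h₁ (h₁ + b₁) := by
    intro x y hx hy
    have hd : 0 < 1 + x + c₁ * y := by nlinarith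
    constructor
    · have : 0 ≤ b₁ * x / (1 + x + c₁ * y) :=
        div_nonneg (by nlinarith) hd.le
      linarith
    · have : b₁ * x / (1 + x + c₁ * y) ≤ b₁ := by
        rw [div_le_iff₀ hd]
        nlinarith [mul_pos hb₁ (mul_pos hc₁ (hh₂.trans_le hy))]
      linarith
  have mem2 : ∀ x y : ℝ, h₁ ≤ x → h₂ ≤ y →
      b₂ * y / (1 + y + c₂ * x) + h₂ ∈ Set.Icc h₂ (h₂ + b₂) := by
    intro x y hx hy
    have hd : 0 < 1 + y + c₂ * x := by nlinarith
    constructor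
    · have : 0 ≤ b₂ * y / (1 + y + c₂ * x) :=
        div_nonneg (by nlinarith) hd.le
      linarith
    · have : b₂ * y / (1 + y + c₂ * x) ≤ b₂ := by
        rw [div_le_iff₀ hd]
        nlinarith [mul_pos hb₂ (mul_pos hc₂ (hh₁.trans_le hx))]
      linarith
  set A := Set.Icc h₁ (h₁ + b₁)
  set B := Set.Icc h₂ (h₂ + b₂)
  let F : A × Bᵒᵈ →o A × Bᵒᵈ :=
    { toFun := fun p =>
        (⟨b₁ * (p.1 : ℝ) / (1 + (p.1 : ℝ) + c₁ * ((OrderDual.ofDual p.2 : B) : ℝ)) + h₁,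
          mem1 _ _ p.1.2.1 (OrderDual.ofDual p.2).2.1⟩,
         OrderDual.toDual
          ⟨b₂ * ((OrderDual.ofDual p.2 : B) : ℝ) /
              (1 + ((OrderDual.ofDual p.2 : B) : ℝ) + c₂ * (p.1 : ℝ)) + h₂,
          mem2 _ _ p.1.2.1 (OrderDual.ofDual p.2).2.1⟩)
      monotone' := by
        rintro ⟨x, y⟩ ⟨x', y'⟩ ⟨hle1, hle2⟩
        have hxx : (x : ℝ) ≤ (x' : ℝ) := hle1
        have hyle : ((OrderDual.ofDual y' : B) : ℝ) ≤ ((OrderDual.ofDual y : B) : ℝ) := hle2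
        have hx1 : h₁ ≤ (x : ℝ) := x.2.1
        have hx1' : h₁ ≤ (x' : ℝ) := x'.2.1
        have hy1 : h₂ ≤ ((OrderDual.ofDual y : B) : ℝ) := (OrderDual.ofDual y).2.1
        have hy1' : h₂ ≤ ((OrderDual.ofDual y' : B) : ℝ) := (OrderDual.ofDual y').2.1
        have hd1 : 0 < 1 + (x : ℝ) + c₁ * ((OrderDual.ofDual y : B) : ℝ) := by nlinarith
        have hd2 : 0 < 1 + (x' : ℝ) + c₁ * ((OrderDual.ofDual y' : B) : ℝ) := by nlinarith
        have hd3 : 0 < 1 + ((OrderDual.ofDual y : B) : ℝ) + c₂ * (x : ℝ) := by nlinarith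
        have hd4 : 0 < 1 + ((OrderDual.ofDual y' : B) : ℝ) + c₂ * (x' : ℝ) := by nlinarith
        constructor
        · show (⟨_, _⟩ : A) ≤ ⟨_, _⟩
          rw [Subtype.mk_le_mk]
          have := auxMono9 hb₁ hc₁ (hh₁.le.trans hx1) (hh₂.le.trans hy1') hxx hyle hd1 hd2
          linarith
        · show OrderDual.toDual (⟨_, _⟩ : B) ≤ OrderDual.toDual ⟨_, _⟩
          rw [OrderDual.toDual_le_toDual, Subtype.mk_le_mk]
          have := auxMono9 hb₂ hc₂ (hh₂.le.trans hy1') (hh₁.le.trans hx1) hyle hxx hd4 hd3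
          linarith }
  obtain ⟨p, hp⟩ : ∃ p, F p = p := ⟨OrderHom.lfp F, OrderHom.map_lfp F⟩
  refine ⟨(p.1 : ℝ), ((OrderDual.ofDual p.2 : B) : ℝ), p.1.2.1, p.1.2.2,
    (OrderDual.ofDual p.2).2.1, (OrderDual.ofDual p.2).2.2, ?_⟩
  rw [hT]
  have h1 := congrArg (fun q : A × Bᵒᵈ => (q.1 : ℝ)) hp
  have h2 := congrArg (fun q : A × Bᵒᵈ => ((OrderDual.ofDual q.2 : B) : ℝ)) hp
  simp only [F] at h1 h2
  exact Prod.ext h1 h2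
end

section
/- Let b₁, c₁, h₁, b₂, c₂, h₂ be positive reals. Then there exists a point (x,y) ∈ ℝ² with x ≤ h₁ and y ≤ h₂ satisfying simultaneously x² + c₁·x·y + (1−b₁−h₁)·x − c₁·h₁·y − h₁ = 0 and y² + c₂·x·y + (1−b₂−h₂)·y − c₂·h₂·x − h₂ = 0; that is, the quadrant Q₃(h₁,h₂) = {(x,y) : x ≤ h₁, y ≤ h₂} contains at least one intersection point of the critical curves C₁ and C₂. -/
/-- The critical curves
`C₁ = {x² + c₁xy + (1−b₁−h₁)x − c₁h₁y − h₁ = 0}` and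
`C₂ = {y² + c₂xy + (1−b₂−h₂)y − c₂h₂x − h₂ = 0}` intersect in the quadrant
`Q₃(h₁,h₂) = {(x,y) : x ≤ h₁, y ≤ h₂}`. -/
theorem stmt10 (b₁ c₁ h₁ b₂ c₂ h₂ : ℝ)
    (hb₁ : 0 < b₁) (hc₁ : 0 < c₁) (hh₁ : 0 < h₁)
    (hb₂ : 0 < b₂) (hc₂ : 0 < c₂) (hh₂ : 0 < h₂) :
    ∃ x y : ℝ, x ≤ h₁ ∧ y ≤ h₂ ∧
      x ^ 2 + c₁ * x * y + (1 - b₁ - h₁) * x - c₁ * h₁ * y - h₁ = 0 ∧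
      y ^ 2 + c₂ * x * y + (1 - b₂ - h₂) * y - c₂ * h₂ * x - h₂ = 0 := by
  classical
  -- constants
  obtain ⟨A, hA⟩ : ∃ A : ℝ, A = c₂ * h₁ + 1 + b₂ + h₂ := ⟨_, rfl⟩
  obtain ⟨B, hB⟩ : ∃ B : ℝ, B = c₂ * h₂ * h₁ + h₂ := ⟨_, rfl⟩
  obtain ⟨K, hK⟩ : ∃ K : ℝ, K = A + B + 1 := ⟨_, rfl⟩
  have hApos : 0 < A := by rw [hA]; positivity
  have hBpos : 0 < B := by rw [hB]; positivity
  have hKpos : 0 < K := by rw [hK]; positivity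
  obtain ⟨ε, hε⟩ : ∃ ε : ℝ, ε = min (h₁ / 2) (b₁ * h₁ / (2 * c₁ * K)) := ⟨_, rfl⟩
  have hεpos : 0 < ε := by
    rw [hε]; exact lt_min (by positivity) (by positivity)
  have hεh : ε ≤ h₁ / 2 := by rw [hε]; exact min_le_left _ _
  have hεK : ε ≤ b₁ * h₁ / (2 * c₁ * K) := by rw [hε]; exact min_le_right _ _
  obtain ⟨x₁, hx₁def⟩ : ∃ x₁ : ℝ, x₁ = h₁ - ε := ⟨_, rfl⟩
  have hx₁pos : 0 < x₁ := by rw [hx₁def]; linarith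
  have hx₁lt : x₁ < h₁ := by rw [hx₁def]; linarith
  obtain ⟨M, hM⟩ : ∃ M : ℝ, M = 2 + c₁ * h₂ + c₁ * h₂ * h₁ + h₁ := ⟨_, rfl⟩
  obtain ⟨a, ha⟩ : ∃ a : ℝ, a = -M := ⟨_, rfl⟩
  have hMpos : 0 < M := by rw [hM]; positivity
  have ha0 : a < 0 := by rw [ha]; linarith
  have hax₁ : a ≤ x₁ := le_of_lt (lt_trans ha0 hx₁pos)
  -- the function giving y on C₁ as a function of x, for x < h₁
  obtain ⟨f, hf⟩ : ∃ f : ℝ → ℝ,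
      f = fun x => (b₁ * x - (x - h₁) * (x + 1)) / (c₁ * (x - h₁)) := ⟨_, rfl⟩
  have hfval : ∀ x : ℝ, f x = (b₁ * x - (x - h₁) * (x + 1)) / (c₁ * (x - h₁)) := by
    intro x; rw [hf]
  have hden : ∀ x : ℝ, x < h₁ → c₁ * (x - h₁) < 0 := by
    intro x hx
    exact mul_neg_of_pos_of_neg hc₁ (by linarith)
  have hfcont : ContinuousOn f (Set.Icc a x₁) := by
    rw [hf]
    apply ContinuousOn.div (by fun_prop) (by fun_prop)
    intro x hx
    exact ne_of_lt (hden x (lt_of_le_of_lt hx.2 hx₁lt))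
  -- points on the graph of f satisfy the first equation
  have hF : ∀ x : ℝ, x < h₁ →
      x ^ 2 + c₁ * x * f x + (1 - b₁ - h₁) * x - c₁ * h₁ * f x - h₁ = 0 := by
    intro x hx
    have hd := ne_of_lt (hden x hx)
    have hd' : x - h₁ ≠ 0 := sub_ne_zero.mpr (ne_of_lt hx)
    have hc' : c₁ ≠ 0 := ne_of_gt hc₁
    rw [hfval]
    field_simp
    ring
  -- f a > h₂
  have hfa : h₂ < f a := by
    have hd : c₁ * (a - h₁) < 0 := hden a (by linarith)
    rw [hfval, lt_div_iff_of_neg hd, ha]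
    have hM2 : 2 ≤ M := by
      rw [hM]
      nlinarith [mul_pos hc₁ hh₂, mul_pos (mul_pos hc₁ hh₂) hh₁]
    have hsplit : M * M = M * (1 + c₁ * h₂) + M * (1 + c₁ * h₂ * h₁ + h₁) := by
      rw [hM]; ring
    have hkey : (1 + c₁ * h₂ * h₁ + h₁) * 2 ≤ (1 + c₁ * h₂ * h₁ + h₁) * M :=
      mul_le_mul_of_nonneg_left hM2 (by positivity)
    nlinarith [hsplit, hkey, mul_pos hb₁ hMpos, mul_pos hh₁ hMpos]
  -- f 0 < h₂
  have hf0 : f 0 < h₂ := by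
    have hd : c₁ * ((0 : ℝ) - h₁) < 0 := hden 0 hh₁
    rw [hfval, div_lt_iff_of_neg hd]
    nlinarith
  -- f x₁ ≤ -K
  have hfx₁ : f x₁ ≤ -K := by
    have hd : c₁ * (x₁ - h₁) < 0 := hden x₁ hx₁lt
    rw [hfval, div_le_iff_of_neg hd]
    have hx₁h : x₁ - h₁ = -ε := by rw [hx₁def]; ring
    rw [hx₁h]
    have h1 : c₁ * ε * K ≤ b₁ * h₁ / 2 := by
      have h2 : (0:ℝ) < 2 * c₁ * K := by positivity
      rw [le_div_iff₀ h2] at hεK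
      linarith
    have h3 : b₁ * h₁ / 2 ≤ b₁ * (h₁ - ε) := by
      have : b₁ * ε ≤ b₁ * (h₁ / 2) :=
        mul_le_mul_of_nonneg_left hεh (le_of_lt hb₁)
      linarith
    have h4 : 0 ≤ ε * (x₁ + 1) := by positivity
    have hx₁eq : b₁ * x₁ = b₁ * (h₁ - ε) := by rw [hx₁def]
    linarith [h1, h3, h4, hx₁eq]
  have hKh₂ : h₂ < K := by rw [hK, hA, hB]; have := mul_pos hc₂ hh₁; have := mul_pos (mul_pos hc₂ hh₂) hh₁; linarith
  have hfx₁h₂ : f x₁ < h₂ := lt_of_le_of_lt hfx₁ (by linarith)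
  -- the second-equation function along the graph of f
  obtain ⟨φ, hφ⟩ : ∃ φ : ℝ → ℝ, φ = fun x =>
      (f x) ^ 2 + c₂ * x * f x + (1 - b₂ - h₂) * f x - c₂ * h₂ * x - h₂ := ⟨_, rfl⟩
  have hφval : ∀ x : ℝ, φ x =
      (f x) ^ 2 + c₂ * x * f x + (1 - b₂ - h₂) * f x - c₂ * h₂ * x - h₂ := by
    intro x; rw [hφ]
  have hφcont : ContinuousOn φ (Set.Icc a x₁) := by
    rw [hφ]
    apply ContinuousOn.sub
    apply ContinuousOn.sub
    apply ContinuousOn.add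
    apply ContinuousOn.add
    · exact hfcont.pow 2
    · exact (continuousOn_const.mul continuousOn_id).mul hfcont
    · exact continuousOn_const.mul hfcont
    · fun_prop
    · exact continuousOn_const
  -- φ x₁ > 0
  have hφx₁ : 0 < φ x₁ := by
    rw [hφval]
    have hY1 : A + B + 1 ≤ -(f x₁) := by rw [hK] at hfx₁; linarith
    have hcoef : c₂ * x₁ + 1 - b₂ - h₂ ≤ A := by
      have : c₂ * x₁ ≤ c₂ * h₁ :=
        mul_le_mul_of_nonneg_left (le_of_lt hx₁lt) (le_of_lt hc₂)
      rw [hA]; linarith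
    have hY2 : B + 1 ≤ -(f x₁) - (c₂ * x₁ + 1 - b₂ - h₂) := by linarith
    have key : (A + B + 1) * (B + 1) ≤
        (-(f x₁)) * (-(f x₁) - (c₂ * x₁ + 1 - b₂ - h₂)) :=
      mul_le_mul hY1 hY2 (by positivity) (by linarith)
    have hc : c₂ * h₂ * x₁ + h₂ ≤ B := by
      have : c₂ * h₂ * x₁ ≤ c₂ * h₂ * h₁ :=
        mul_le_mul_of_nonneg_left (le_of_lt hx₁lt) (by positivity)
      rw [hB]; linarith
    have hfin : B + 1 ≤ (A + B + 1) * (B + 1) :=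
      le_mul_of_one_le_left (by positivity) (by linarith)
    have hexp : (-(f x₁)) * (-(f x₁) - (c₂ * x₁ + 1 - b₂ - h₂)) =
        (f x₁) ^ 2 + c₂ * x₁ * (f x₁) + (1 - b₂ - h₂) * (f x₁) := by ring
    linarith [key, hfin, hc, hexp]
  -- the set of points where f = h₂
  obtain ⟨S, hSdef⟩ : ∃ S : Set ℝ, S = {x ∈ Set.Icc a x₁ | f x = h₂} := ⟨_, rfl⟩
  have hSmem : ∀ x : ℝ, x ∈ S ↔ x ∈ Set.Icc a x₁ ∧ f x = h₂ := by
    intro x; rw [hSdef]; rfl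
  have hSclosed : IsClosed S := by
    have : S = Set.Icc a x₁ ∩ f ⁻¹' {h₂} := by
      ext x; rw [hSmem]; simp
    rw [this]
    exact hfcont.preimage_isClosed_of_isClosed isClosed_Icc isClosed_singleton
  have hSsub : S ⊆ Set.Icc a x₁ := fun x hx => ((hSmem x).1 hx).1
  have hScompact : IsCompact S := isCompact_Icc.of_isClosed_subset hSclosed hSsub
  have hSne : S.Nonempty := by
    have h0x : (0 : ℝ) ≤ x₁ := le_of_lt hx₁pos
    have hsub : Set.Icc a (0 : ℝ) ⊆ Set.Icc a x₁ := Set.Icc_subset_Icc_right h0x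
    have hiv := intermediate_value_Icc' (le_of_lt ha0) (hfcont.mono hsub)
    have hmem : h₂ ∈ Set.Icc (f 0) (f a) := ⟨le_of_lt hf0, le_of_lt hfa⟩
    obtain ⟨x, hxmem, hxeq⟩ := hiv hmem
    exact ⟨x, (hSmem x).2 ⟨hsub hxmem, hxeq⟩⟩
  obtain ⟨x₂, hx₂def⟩ : ∃ x₂ : ℝ, x₂ = sSup S := ⟨_, rfl⟩
  have hx₂mem : x₂ ∈ S := by rw [hx₂def]; exact hScompact.sSup_mem hSne
  have hx₂Icc : x₂ ∈ Set.Icc a x₁ := ((hSmem x₂).1 hx₂mem).1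
  have hfx₂ : f x₂ = h₂ := ((hSmem x₂).1 hx₂mem).2
  have hSbdd : BddAbove S := hScompact.bddAbove
  -- above x₂, f < h₂
  have habove : ∀ x ∈ Set.Ioc x₂ x₁, f x < h₂ := by
    intro x hx
    by_contra hcon
    push_neg at hcon
    have hsub : Set.Icc x x₁ ⊆ Set.Icc a x₁ :=
      Set.Icc_subset_Icc_left (le_trans hx₂Icc.1 (le_of_lt hx.1))
    have hiv := intermediate_value_Icc' hx.2 (hfcont.mono hsub)
    have hmem : h₂ ∈ Set.Icc (f x₁) (f x) := ⟨le_of_lt hfx₁h₂, hcon⟩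
    obtain ⟨x', hx'mem, hx'eq⟩ := hiv hmem
    have hx'S : x' ∈ S := (hSmem x').2 ⟨hsub hx'mem, hx'eq⟩
    have h1 : x' ≤ x₂ := by rw [hx₂def]; exact le_csSup hSbdd hx'S
    have h2 : x₂ < x' := lt_of_lt_of_le hx.1 hx'mem.1
    linarith
  -- φ x₂ < 0
  have hφx₂ : φ x₂ < 0 := by
    rw [hφval, hfx₂]
    have : h₂ ^ 2 + c₂ * x₂ * h₂ + (1 - b₂ - h₂) * h₂ - c₂ * h₂ * x₂ - h₂
        = -(b₂ * h₂) := by ring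
    rw [this]
    have := mul_pos hb₂ hh₂
    linarith
  -- IVT for φ on [x₂, x₁]
  have hx₂x₁ : x₂ ≤ x₁ := hx₂Icc.2
  have hφc : ContinuousOn φ (Set.Icc x₂ x₁) :=
    hφcont.mono (Set.Icc_subset_Icc_left hx₂Icc.1)
  have hiv := intermediate_value_Icc hx₂x₁ hφc
  have h0mem : (0 : ℝ) ∈ Set.Icc (φ x₂) (φ x₁) := ⟨le_of_lt hφx₂, le_of_lt hφx₁⟩
  obtain ⟨xs, hxsmem, hxseq⟩ := hiv h0mem
  refine ⟨xs, f xs, ?_, ?_, ?_, ?_⟩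
  · exact le_of_lt (lt_of_le_of_lt hxsmem.2 hx₁lt)
  · rcases eq_or_lt_of_le hxsmem.1 with heq | hlt
    · rw [← heq, hfx₂]
    · exact le_of_lt (habove xs ⟨hlt, hxsmem.2⟩)
  · exact hF xs (lt_of_le_of_lt hxsmem.2 hx₁lt)
  · rw [hφval] at hxseq; exact hxseq
end

section
/- Let p be a real analytic function defined and strictly monotone on a neighborhood of x₀ ∈ ℝ, and let q be a real analytic function defined and strictly monotone on a neighborhood of y₀ ∈ ℝ, with p(x₀) = y₀ and q(y₀) = x₀. Assume that q ∘ p is not the identity function on any neighborhood of x₀ and that p ∘ q is not the identity function on any neighborhood of y₀. Let d_x be the multiplicity (order of vanishing) of x₀ as a zero of the analytic function x ↦ x − q(p(x)), and let d_y be the multiplicity of y₀ as a zero of the analytic function y ↦ y − p(q(y)). Then d_x = d_y, and both are finite. -/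
open Filter

namespace Stmt12Aux

/-- analytic at a point implies deriv analytic at the point -/
lemma analyticAt_deriv {f : ℝ → ℝ} {x : ℝ} (hf : AnalyticAt ℝ f x) :
    AnalyticAt ℝ (deriv f) x := by
  obtain ⟨s, hs, h⟩ := hf.eventually_analyticAt.exists_mem
  exact AnalyticOnNhd.deriv (fun y hy => h y hy) x (mem_of_mem_nhds hs)

/-- `f` vanishes to order at least `k` at `x₀`, with analytic quotient. -/
def OrdGE (f : ℝ → ℝ) (x₀ : ℝ) (k : ℕ) : Prop :=
  ∃ g : ℝ → ℝ, AnalyticAt ℝ g x₀ ∧ f =ᶠ[nhds x₀] fun x => (x - x₀) ^ k * g x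

lemma ordGE_congr {f f' : ℝ → ℝ} {x₀ : ℝ} {k : ℕ} (h : f =ᶠ[nhds x₀] f') :
    OrdGE f x₀ k → OrdGE f' x₀ k := fun ⟨g, hg, he⟩ => ⟨g, hg, h.symm.trans he⟩

lemma ordGE_zero {f : ℝ → ℝ} {x₀ : ℝ} (hf : AnalyticAt ℝ f x₀) : OrdGE f x₀ 0 :=
  ⟨f, hf, by filter_upwards with x; simp⟩

lemma ordGE_mono {f : ℝ → ℝ} {x₀ : ℝ} {k : ℕ} (h : OrdGE f x₀ (k + 1)) : OrdGE f x₀ k := by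
  obtain ⟨g, hg, he⟩ := h
  refine ⟨fun x => (x - x₀) * g x, (analyticAt_id.sub analyticAt_const).mul hg, ?_⟩
  filter_upwards [he] with x hx
  rw [hx]; ring

lemma ordGE_add {f g : ℝ → ℝ} {x₀ : ℝ} {k : ℕ} (hf : OrdGE f x₀ k) (hg : OrdGE g x₀ k) :
    OrdGE (fun x => f x + g x) x₀ k := by
  obtain ⟨u, hu, heu⟩ := hf
  obtain ⟨v, hv, hev⟩ := hg
  refine ⟨fun x => u x + v x, hu.add hv, ?_⟩
  filter_upwards [heu, hev] with x h1 h2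
  simp only [h1, h2]; ring

lemma ordGE_mul_left {f h : ℝ → ℝ} {x₀ : ℝ} {k : ℕ} (hh : AnalyticAt ℝ h x₀)
    (hf : OrdGE f x₀ k) : OrdGE (fun x => h x * f x) x₀ k := by
  obtain ⟨u, hu, heu⟩ := hf
  refine ⟨fun x => h x * u x, hh.mul hu, ?_⟩
  filter_upwards [heu] with x h1
  simp only [h1]; ring

/-- derivative of a factored function -/
lemma deriv_fact {g : ℝ → ℝ} {x₀ : ℝ} (hg : AnalyticAt ℝ g x₀) (k : ℕ) :
    deriv (fun x => (x - x₀) ^ (k + 1) * g x) =ᶠ[nhds x₀]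
      fun x => (x - x₀) ^ k * ((k + 1) * g x + (x - x₀) * deriv g x) := by
  filter_upwards [hg.eventually_analyticAt] with x hx
  have h1 : DifferentiableAt ℝ (fun x : ℝ => (x - x₀) ^ (k + 1)) x :=
    ((differentiable_id.sub_const x₀).pow (k + 1)).differentiableAt
  rw [deriv_fun_mul h1 hx.differentiableAt]
  have h2 : deriv (fun x : ℝ => (x - x₀) ^ (k + 1)) x = (k + 1) * (x - x₀) ^ k := by
    have := ((hasDerivAt_id x).sub_const x₀).pow (k + 1)
    simpa [mul_comm] using this.deriv
  rw [h2]; push_cast; ring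

lemma ordGE_deriv' {f g : ℝ → ℝ} {x₀ : ℝ} {k : ℕ} (hg : AnalyticAt ℝ g x₀)
    (he : f =ᶠ[nhds x₀] fun x => (x - x₀) ^ (k + 1) * g x) :
    deriv f =ᶠ[nhds x₀]
      fun x => (x - x₀) ^ k * ((k + 1) * g x + (x - x₀) * deriv g x) :=
  he.deriv.trans (deriv_fact hg k)

lemma ordGE_deriv {f : ℝ → ℝ} {x₀ : ℝ} {k : ℕ} (h : OrdGE f x₀ (k + 1)) :
    OrdGE (deriv f) x₀ k := by
  obtain ⟨g, hg, he⟩ := h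
  exact ⟨fun x => (k + 1) * g x + (x - x₀) * deriv g x,
    ((analyticAt_const.mul hg).add ((analyticAt_id.sub analyticAt_const).mul
      (analyticAt_deriv hg))), ordGE_deriv' hg he⟩

/-- cancellation: a nonvanishing-coefficient factorization bounds any other factorization. -/
lemma cancel {u g : ℝ → ℝ} {x₀ : ℝ} {m k : ℕ} (hu : ContinuousAt u x₀) (hu0 : u x₀ ≠ 0)
    (hgc : ContinuousAt g x₀)
    (h : (fun x => (x - x₀) ^ m * u x) =ᶠ[nhds x₀] fun x => (x - x₀) ^ k * g x) :
    k ≤ m := by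
  by_contra hlt
  push_neg at hlt
  have key : ∀ᶠ x in nhdsWithin x₀ {x₀}ᶜ, u x = (x - x₀) ^ (k - m) * g x := by
    filter_upwards [eventually_nhdsWithin_of_eventually_nhds h,
      self_mem_nhdsWithin] with x hx hne
    have hxne : x - x₀ ≠ 0 := sub_ne_zero.2 hne
    have : (x - x₀) ^ m * u x = (x - x₀) ^ m * ((x - x₀) ^ (k - m) * g x) := by
      rw [hx, ← mul_assoc, ← pow_add]
      congr 2
      omega
    exact mul_left_cancel₀ (pow_ne_zero m hxne) this
  have h1 : Filter.Tendsto u (nhdsWithin x₀ {x₀}ᶜ) (nhds (u x₀)) :=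
    hu.continuousWithinAt.tendsto
  have h2 : Filter.Tendsto (fun x => (x - x₀) ^ (k - m) * g x) (nhdsWithin x₀ {x₀}ᶜ)
      (nhds 0) := by
    have : ContinuousAt (fun x => (x - x₀) ^ (k - m) * g x) x₀ :=
      (((continuous_id.sub continuous_const).pow _).continuousAt).mul hgc
    have h0 : (x₀ - x₀) ^ (k - m) * g x₀ = 0 := by
      rw [sub_self, zero_pow (by omega : k - m ≠ 0), zero_mul]
    have := this.continuousWithinAt.tendsto (s := {x₀}ᶜ)
    rwa [h0] at this
  have := tendsto_nhds_unique (h1.congr' key) h2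
  exact hu0 this


/-- Factorization with nonvanishing analytic factor for a not-eventually-zero analytic function. -/
lemma exists_factor {f : ℝ → ℝ} {x₀ : ℝ} (hf : AnalyticAt ℝ f x₀)
    (h0 : ¬ ∀ᶠ x in nhds x₀, f x = 0) :
    ∃ (n : ℕ) (g : ℝ → ℝ), AnalyticAt ℝ g x₀ ∧ g x₀ ≠ 0 ∧
      f =ᶠ[nhds x₀] fun x => (x - x₀) ^ n * g x := by
  have hne : analyticOrderAt f x₀ ≠ ⊤ := by
    simp only [ne_eq, analyticOrderAt_eq_top]; exact h0
  obtain ⟨n, hn⟩ : ∃ n : ℕ, analyticOrderAt f x₀ = n := by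
    lift analyticOrderAt f x₀ to ℕ using hne with n hn
    exact ⟨n, rfl⟩
  obtain ⟨g, hg, hg0, he⟩ := (hf.analyticOrderAt_eq_natCast (n := n)).mp hn
  exact ⟨n, g, hg, hg0, by
    filter_upwards [he] with x hx
    rw [hx]; simp [smul_eq_mul]⟩

lemma ordGE_one {f : ℝ → ℝ} {x₀ : ℝ} (hf : AnalyticAt ℝ f x₀) (h0 : f x₀ = 0) :
    OrdGE f x₀ 1 := by
  by_cases hev : ∀ᶠ x in nhds x₀, f x = 0
  · exact ⟨fun _ => 0, analyticAt_const, by filter_upwards [hev] with x hx; simp [hx]⟩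
  · obtain ⟨n, g, hg, hg0, he⟩ := exists_factor hf hev
    have hn : n ≠ 0 := by
      rintro rfl
      apply hg0
      have := he.eq_of_nhds
      simpa [h0] using this.symm
    refine ⟨fun x => (x - x₀) ^ (n - 1) * g x,
      ((analyticAt_id.sub analyticAt_const).pow _).mul hg, ?_⟩
    filter_upwards [he] with x hx
    rw [hx, pow_one, ← mul_assoc, ← pow_succ']
    congr 2
    omega

/-- order-exactly-one factorization from nonvanishing derivative -/
lemma factor_one {f : ℝ → ℝ} {x₀ : ℝ} (hf : AnalyticAt ℝ f x₀) (h0 : f x₀ = 0)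
    (hd : deriv f x₀ ≠ 0) :
    ∃ u : ℝ → ℝ, AnalyticAt ℝ u x₀ ∧ u x₀ ≠ 0 ∧
      f =ᶠ[nhds x₀] fun x => (x - x₀) * u x := by
  have hev : ¬ ∀ᶠ x in nhds x₀, f x = 0 := by
    intro hev
    apply hd
    have : deriv f =ᶠ[nhds x₀] deriv (fun _ : ℝ => (0 : ℝ)) :=
      Filter.EventuallyEq.deriv hev
    rw [this.eq_of_nhds]
    simp
  obtain ⟨n, g, hg, hg0, he⟩ := exists_factor hf hev
  have hn : n ≠ 0 := by
    rintro rfl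
    apply hg0
    have := he.eq_of_nhds
    simpa [h0] using this.symm
  have hn1 : n = 1 := by
    by_contra hne1
    apply hd
    obtain ⟨m, rfl⟩ : ∃ m, n = m + 1 := ⟨n - 1, by omega⟩
    have hm : m ≠ 0 := by omega
    have := (ordGE_deriv' hg he).eq_of_nhds
    rw [this, sub_self, zero_pow hm, zero_mul]
  subst hn1
  exact ⟨g, hg, hg0, by filter_upwards [he] with x hx; rw [hx, pow_one]⟩

/-- "integration": if `f x₀ = 0` and `deriv f` vanishes to order `k`, `f` vanishes to order `k+1` -/
lemma ordGE_succ {f : ℝ → ℝ} {x₀ : ℝ} {k : ℕ} (hf : AnalyticAt ℝ f x₀) (h0 : f x₀ = 0)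
    (hd : OrdGE (deriv f) x₀ k) : OrdGE f x₀ (k + 1) := by
  by_cases hev : ∀ᶠ x in nhds x₀, f x = 0
  · exact ⟨fun _ => 0, analyticAt_const, by filter_upwards [hev] with x hx; simp [hx]⟩
  · obtain ⟨n, g, hg, hg0, he⟩ := exists_factor hf hev
    have hn : n ≠ 0 := by
      rintro rfl
      apply hg0
      have := he.eq_of_nhds
      simpa [h0] using this.symm
    obtain ⟨m, rfl⟩ : ∃ m, n = m + 1 := ⟨n - 1, by omega⟩
    -- deriv f =ᶠ (x-x₀)^m * g₁ with g₁ x₀ = (m+1) * g x₀ ≠ 0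
    obtain ⟨g₃, hg₃, he₃⟩ := hd
    have hkm : k ≤ m := by
      refine cancel (u := fun x => (↑m + 1) * g x + (x - x₀) * deriv g x) ?_ ?_
        hg₃.continuousAt ((ordGE_deriv' hg he).symm.trans he₃)
      · exact ((continuousAt_const.mul hg.continuousAt).add
          (((continuous_id.sub continuous_const).continuousAt).mul
            (analyticAt_deriv hg).continuousAt))
      · simp only [sub_self, zero_mul, add_zero]
        positivity
    refine ⟨fun x => (x - x₀) ^ (m - k) * g x,
      ((analyticAt_id.sub analyticAt_const).pow _).mul hg, ?_⟩
    filter_upwards [he] with x hx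
    rw [hx, ← mul_assoc, ← pow_add]
    congr 2
    omega


/-- Key lemma: composing with an analytic function does not decrease order of contact. -/
lemma key : ∀ (k : ℕ) {G A B : ℝ → ℝ} {x₀ c : ℝ}, AnalyticAt ℝ G c →
    AnalyticAt ℝ A x₀ → AnalyticAt ℝ B x₀ → A x₀ = c → B x₀ = c →
    OrdGE (fun x => A x - B x) x₀ k → OrdGE (fun x => G (A x) - G (B x)) x₀ k := by
  intro k
  induction k with
  | zero =>
    intro G A B x₀ c hG hA hB hAc hBc _
    have hGA : AnalyticAt ℝ (fun x => G (A x)) x₀ := (hAc ▸ hG : AnalyticAt ℝ G (A x₀)).comp hA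
    have hGB : AnalyticAt ℝ (fun x => G (B x)) x₀ := (hBc ▸ hG : AnalyticAt ℝ G (B x₀)).comp hB
    exact ordGE_zero (hGA.sub hGB)
  | succ k ih =>
    intro G A B x₀ c hG hA hB hAc hBc h
    have hGA : AnalyticAt ℝ (fun x => G (A x)) x₀ := (hAc ▸ hG : AnalyticAt ℝ G (A x₀)).comp hA
    have hGB : AnalyticAt ℝ (fun x => G (B x)) x₀ := (hBc ▸ hG : AnalyticAt ℝ G (B x₀)).comp hB
    apply ordGE_succ (hGA.sub hGB)
    · simp [hAc, hBc]
    -- compute the derivative eventually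
    have hAt : Filter.Tendsto A (nhds x₀) (nhds c) := hAc ▸ hA.continuousAt
    have hBt : Filter.Tendsto B (nhds x₀) (nhds c) := hBc ▸ hB.continuousAt
    have hder : deriv (fun x => G (A x) - G (B x)) =ᶠ[nhds x₀]
        fun x => deriv G (A x) * deriv A x - deriv G (B x) * deriv B x := by
      filter_upwards [hA.eventually_analyticAt, hB.eventually_analyticAt,
        hAt.eventually hG.eventually_analyticAt, hBt.eventually hG.eventually_analyticAt]
        with x hAx hBx hGAx hGBx
      have d1 : DifferentiableAt ℝ (fun x => G (A x)) x :=
        (hGAx.differentiableAt.comp x hAx.differentiableAt :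
          DifferentiableAt ℝ (G ∘ A) x)
      have d2 : DifferentiableAt ℝ (fun x => G (B x)) x :=
        (hGBx.differentiableAt.comp x hBx.differentiableAt :
          DifferentiableAt ℝ (G ∘ B) x)
      have e1 : deriv (fun x => G (A x)) x = deriv G (A x) * deriv A x := by
        have h' := deriv_comp x hGAx.differentiableAt hAx.differentiableAt
        rwa [Function.comp_def] at h'
      have e2 : deriv (fun x => G (B x)) x = deriv G (B x) * deriv B x := by
        have h' := deriv_comp x hGBx.differentiableAt hBx.differentiableAt
        rwa [Function.comp_def] at h'
      rw [deriv_fun_sub d1 d2, e1, e2]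
    apply ordGE_congr hder.symm
    have hABd : deriv (fun x => A x - B x) =ᶠ[nhds x₀]
        fun x => deriv A x - deriv B x := by
      filter_upwards [hA.eventually_analyticAt, hB.eventually_analyticAt] with x hAx hBx
      exact deriv_sub hAx.differentiableAt hBx.differentiableAt
    have p1 : OrdGE (fun x => deriv G (A x) * (deriv A x - deriv B x)) x₀ k :=
      ordGE_mul_left ((hAc ▸ analyticAt_deriv hG : AnalyticAt ℝ (deriv G) (A x₀)).comp hA)
        (ordGE_congr hABd (ordGE_deriv h))
    have p2 : OrdGE (fun x => deriv B x * (deriv G (A x) - deriv G (B x))) x₀ k :=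
      ordGE_mul_left (analyticAt_deriv hB)
        (ih (analyticAt_deriv hG) hA hB hAc hBc (ordGE_mono h))
    apply ordGE_congr (f := fun x => deriv G (A x) * (deriv A x - deriv B x)
      + deriv B x * (deriv G (A x) - deriv G (B x)))
    · filter_upwards with x; ring
    · exact ordGE_add p1 p2

/-- pull back a factorization along an analytic map that is `(x-x₀) * u` above the base point -/
lemma pullback {f g A u : ℝ → ℝ} {x₀ y₀ : ℝ} {k : ℕ}
    (hA : AnalyticAt ℝ A x₀) (hAy : A x₀ = y₀)
    (hf : f =ᶠ[nhds y₀] fun y => (y - y₀) ^ k * g y)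
    (hu : (fun x => A x - y₀) =ᶠ[nhds x₀] fun x => (x - x₀) * u x) :
    (fun x => f (A x)) =ᶠ[nhds x₀] fun x => (x - x₀) ^ k * (u x ^ k * g (A x)) := by
  have hAt : Filter.Tendsto A (nhds x₀) (nhds y₀) := hAy ▸ hA.continuousAt
  filter_upwards [hAt.eventually hf, hu] with x h1 h2
  rw [h1, h2, mul_pow]
  ring

/-- bridge: factorization to iterated derivatives -/
lemma vanish : ∀ (k : ℕ) {f g : ℝ → ℝ} {x₀ : ℝ}, AnalyticAt ℝ g x₀ →
    f =ᶠ[nhds x₀] (fun x => (x - x₀) ^ k * g x) →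
    (∀ j < k, iteratedDeriv j f x₀ = 0) ∧
      iteratedDeriv k f x₀ = (k.factorial : ℝ) * g x₀ := by
  intro k
  induction k with
  | zero =>
    intro f g x₀ hg he
    refine ⟨fun j hj => absurd hj (by omega), ?_⟩
    rw [iteratedDeriv_zero, he.eq_of_nhds]
    simp
  | succ k ih =>
    intro f g x₀ hg he
    have hder := ordGE_deriv' hg he
    have hg' : AnalyticAt ℝ (fun x => (↑k + 1) * g x + (x - x₀) * deriv g x) x₀ :=
      (analyticAt_const.mul hg).add ((analyticAt_id.sub analyticAt_const).mul
        (analyticAt_deriv hg))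
    obtain ⟨ih1, ih2⟩ := ih hg' hder
    have hf0 : f x₀ = 0 := by
      rw [he.eq_of_nhds, sub_self, zero_pow (Nat.succ_ne_zero k), zero_mul]
    constructor
    · intro j hj
      cases j with
      | zero => rw [iteratedDeriv_zero]; exact hf0
      | succ j =>
        rw [iteratedDeriv_succ']
        exact ih1 j (by omega)
    · rw [iteratedDeriv_succ', ih2]
      simp only [sub_self, zero_mul, add_zero]
      rw [Nat.factorial_succ]
      push_cast
      ring


/-- Core: if `q'(y₀) * p'(x₀) = 1` then the order of `y - p(q y)` is at most that
of `x - q(p x)`. -/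
lemma core {p q : ℝ → ℝ} {x₀ y₀ : ℝ} (hp : AnalyticAt ℝ p x₀) (hq : AnalyticAt ℝ q y₀)
    (hpx : p x₀ = y₀) (hqy : q y₀ = x₀) (hc : deriv q y₀ * deriv p x₀ = 1)
    {a b : ℕ} {gφ gψ : ℝ → ℝ} (hgφ : AnalyticAt ℝ gφ x₀) (hgφ0 : gφ x₀ ≠ 0)
    (hφ : (fun x => x - q (p x)) =ᶠ[nhds x₀] fun x => (x - x₀) ^ a * gφ x)
    (hgψ : AnalyticAt ℝ gψ y₀)
    (hψ : (fun y => y - p (q y)) =ᶠ[nhds y₀] fun y => (y - y₀) ^ b * gψ y) :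
    b ≤ a := by
  have hq' : AnalyticAt ℝ q (p x₀) := by rw [hpx]; exact hq
  have hr : AnalyticAt ℝ (fun x => q (p x)) x₀ := hq'.comp hp
  have hrx : q (p x₀) = x₀ := by rw [hpx, hqy]
  have hp2 : AnalyticAt ℝ p (q (p x₀)) := by rw [hrx]; exact hp
  have hB : AnalyticAt ℝ (fun x => p (q (p x))) x₀ :=
    AnalyticAt.comp (g := p) (f := fun x => q (p x)) hp2 hr
  have hBx : p (q (p x₀)) = y₀ := by rw [hrx, hpx]
  -- step 1: OrdGE (p - y₀) 1
  obtain ⟨u, hu, heu⟩ : OrdGE (fun x => p x - y₀) x₀ 1 :=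
    ordGE_one (hp.sub analyticAt_const) (by simp [hpx])
  simp only [pow_one] at heu
  -- step 2: OrdGE (ψ ∘ p) b
  have step2 : OrdGE (fun x => p x - p (q (p x))) x₀ b := by
    refine ⟨fun x => u x ^ b * gψ (p x), (hu.pow b).mul ((show AnalyticAt ℝ gψ (p x₀) by rw [hpx]; exact hgψ).comp hp), ?_⟩
    exact pullback hp hpx hψ heu
  -- step 3: key lemma with G = q
  have step3 : OrdGE (fun x => q (p x) - q (p (q (p x)))) x₀ b :=
    key b hq hp hB hpx hBx step2
  -- step 4: factor r - x₀ with exact order 1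
  have hdr : deriv (fun x => q (p x) - x₀) x₀ ≠ 0 := by
    have h1 : deriv (fun x => q (p x) - x₀) x₀ = deriv (fun x => q (p x)) x₀ := by
      simp [deriv_sub_const]
    have h2 : deriv (fun x => q (p x)) x₀ = deriv q (p x₀) * deriv p x₀ := by
      have h' := deriv_comp x₀ (hq'.differentiableAt) hp.differentiableAt
      rwa [Function.comp_def] at h'
    rw [h1, h2, hpx, hc]
    norm_num
  obtain ⟨w, hw, hw0, hew⟩ := factor_one (hr.sub analyticAt_const) (by simp [hrx]) hdr
  have hew' : (fun x => (fun x' => q (p x')) x - x₀) =ᶠ[nhds x₀] fun x => (x - x₀) * w x := hew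
  -- step 5: pull back φ's factorization along r
  have step5 : (fun x => (fun x' => x' - q (p x')) (q (p x))) =ᶠ[nhds x₀]
      fun x => (x - x₀) ^ a * (w x ^ a * gφ (q (p x))) :=
    pullback hr hrx hφ hew'
  -- evaluate w x₀ ≠ 0 coefficient
  have hcoef : (fun x => w x ^ a * gφ (q (p x))) x₀ ≠ 0 := by
    simp only [hrx]
    exact mul_ne_zero (pow_ne_zero a hw0) hgφ0
  -- step 6: cancel
  obtain ⟨g₃, hg₃, he₃⟩ := step3
  refine cancel (u := fun x => w x ^ a * gφ (q (p x))) ?_ hcoef hg₃.continuousAt ?_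
  · exact ((hw.continuousAt).pow a).mul
      (AnalyticAt.comp (g := gφ) (f := fun x => q (p x))
        (show AnalyticAt ℝ gφ (q (p x₀)) by rw [hrx]; exact hgφ) hr).continuousAt
  · exact step5.symm.trans he₃

end Stmt12Aux

open Stmt12Aux in
open Filter in
/-- If `p` and `q` are real analytic and strictly monotone near `x₀` and `y₀`
respectively, with `p x₀ = y₀`, `q y₀ = x₀`, and neither `q ∘ p` nor `p ∘ q`
is the identity on any neighborhood, then the orders of vanishing `d_x` of
`x ↦ x − q(p x)` at `x₀` and `d_y` of `y ↦ y − p(q y)` at `y₀` are equal and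
finite: there is a common `k ≥ 1` realizing both multiplicities. -/
theorem stmt12 (p q : ℝ → ℝ) (x₀ y₀ : ℝ) (U V : Set ℝ)
    (hU : U ∈ nhds x₀) (hV : V ∈ nhds y₀)
    (hpa : AnalyticOnNhd ℝ p U) (hqa : AnalyticOnNhd ℝ q V)
    (hpm : StrictMonoOn p U ∨ StrictAntiOn p U)
    (hqm : StrictMonoOn q V ∨ StrictAntiOn q V)
    (hpx : p x₀ = y₀) (hqy : q y₀ = x₀)
    (hqp : ∀ W ∈ nhds x₀, ¬ Set.EqOn (fun x => q (p x)) id W)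
    (hpq : ∀ W ∈ nhds y₀, ¬ Set.EqOn (fun y => p (q y)) id W) :
    ∃ k : ℕ, 1 ≤ k ∧
      (∀ j < k, iteratedDeriv j (fun x => x - q (p x)) x₀ = 0) ∧
      iteratedDeriv k (fun x => x - q (p x)) x₀ ≠ 0 ∧
      (∀ j < k, iteratedDeriv j (fun y => y - p (q y)) y₀ = 0) ∧
      iteratedDeriv k (fun y => y - p (q y)) y₀ ≠ 0 := by
  have hxU : x₀ ∈ U := mem_of_mem_nhds hU
  have hyV : y₀ ∈ V := mem_of_mem_nhds hV
  have hpA : AnalyticAt ℝ p x₀ := hpa x₀ hxU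
  have hqA : AnalyticAt ℝ q y₀ := hqa y₀ hyV
  have hq' : AnalyticAt ℝ q (p x₀) := by rw [hpx]; exact hqA
  have hp' : AnalyticAt ℝ p (q y₀) := by rw [hqy]; exact hpA
  have hφa : AnalyticAt ℝ (fun x => x - q (p x)) x₀ :=
    analyticAt_id.sub (AnalyticAt.comp (g := q) (f := p) hq' hpA)
  have hψa : AnalyticAt ℝ (fun y => y - p (q y)) y₀ :=
    analyticAt_id.sub (AnalyticAt.comp (g := p) (f := q) hp' hqA)
  have hφne : ¬ ∀ᶠ x in nhds x₀, (fun x => x - q (p x)) x = 0 := by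
    intro hev
    obtain ⟨W, hW, hWp⟩ := hev.exists_mem
    exact hqp W hW fun x hx => (sub_eq_zero.mp (hWp x hx)).symm
  have hψne : ¬ ∀ᶠ y in nhds y₀, (fun y => y - p (q y)) y = 0 := by
    intro hev
    obtain ⟨W, hW, hWp⟩ := hev.exists_mem
    exact hpq W hW fun y hy => (sub_eq_zero.mp (hWp y hy)).symm
  obtain ⟨a, gφ, hgφ, hgφ0, hφ⟩ := exists_factor hφa hφne
  obtain ⟨b, gψ, hgψ, hgψ0, hψ⟩ := exists_factor hψa hψne
  have hφ0 : x₀ - q (p x₀) = 0 := by rw [hpx, hqy, sub_self]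
  have hψ0 : y₀ - p (q y₀) = 0 := by rw [hqy, hpx, sub_self]
  have ha1 : 1 ≤ a := by
    rcases Nat.eq_zero_or_pos a with h | h
    · exfalso
      apply hgφ0
      have := hφ.eq_of_nhds
      simp only [h, pow_zero, one_mul] at this
      rw [← this]
      exact hφ0
    · exact h
  have hb1 : 1 ≤ b := by
    rcases Nat.eq_zero_or_pos b with h | h
    · exfalso
      apply hgψ0
      have := hψ.eq_of_nhds
      simp only [h, pow_zero, one_mul] at this
      rw [← this]
      exact hψ0
    · exact h
  have hab : a = b := by
    by_cases hc : deriv q y₀ * deriv p x₀ = 1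
    · have h1 : b ≤ a := core hpA hqA hpx hqy hc hgφ hgφ0 hφ hgψ hψ
      have h2 : a ≤ b := core hqA hpA hqy hpx (by rw [mul_comm]; exact hc) hgψ hgψ0 hψ hgφ hφ
      omega
    · have hda : deriv (fun x => x - q (p x)) x₀ ≠ 0 := by
        have d1 : DifferentiableAt ℝ (fun x => q (p x)) x₀ :=
          (AnalyticAt.comp (g := q) (f := p) hq' hpA).differentiableAt
        have e1 : deriv (fun x => x - q (p x)) x₀ = 1 - deriv q (p x₀) * deriv p x₀ := by
          rw [deriv_fun_sub differentiableAt_fun_id d1, deriv_id'']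
          congr 1
          have h' := deriv_comp x₀ hq'.differentiableAt hpA.differentiableAt
          rwa [Function.comp_def] at h'
        rw [e1, hpx]
        intro h
        exact hc (by linarith)
      have hdb : deriv (fun y => y - p (q y)) y₀ ≠ 0 := by
        have d1 : DifferentiableAt ℝ (fun y => p (q y)) y₀ :=
          (AnalyticAt.comp (g := p) (f := q) hp' hqA).differentiableAt
        have e1 : deriv (fun y => y - p (q y)) y₀ = 1 - deriv p (q y₀) * deriv q y₀ := by
          rw [deriv_fun_sub differentiableAt_fun_id d1, deriv_id'']
          congr 1
          have h' := deriv_comp y₀ hp'.differentiableAt hqA.differentiableAt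
          rwa [Function.comp_def] at h'
        rw [e1, hqy]
        intro h
        exact hc (by linarith)
      have haa : a = 1 := by
        by_contra hne
        apply hda
        have := (vanish a hgφ hφ).1 1 (by omega)
        rwa [iteratedDeriv_one] at this
      have hbb : b = 1 := by
        by_contra hne
        apply hdb
        have := (vanish b hgψ hψ).1 1 (by omega)
        rwa [iteratedDeriv_one] at this
      rw [haa, hbb]
  refine ⟨a, ha1, (vanish a hgφ hφ).1, ?_, ?_, ?_⟩
  · rw [(vanish a hgφ hφ).2]
    exact mul_ne_zero (Nat.cast_ne_zero.2 a.factorial_ne_zero) hgφ0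
  · intro j hj
    exact (vanish b hgψ hψ).1 j (by omega)
  · rw [hab, (vanish b hgψ hψ).2]
    exact mul_ne_zero (Nat.cast_ne_zero.2 b.factorial_ne_zero) hgψ0
end

section
/- Let b₁, c₁, h₁, b₂, c₂, h₂ be positive reals and define T on [0,∞)×[0,∞) by T(x,y) = (b₁·x/(1+x+c₁·y) + h₁, b₂·y/(1+y+c₂·x) + h₂). Then the set E of fixed points of T in [0,∞)×[0,∞) is nonempty, has at most three elements, and is totally ordered by the south-east order: for any two fixed points p, q ∈ E, either p ≤se q or q ≤se p. -/
open Polynomial in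
lemma no_four_roots (P : Polynomial ℝ) (hdeg : P.natDegree ≤ 4)
    (a b x₁ x₂ x₃ x₄ : ℝ)
    (h12 : x₁ ≠ x₂) (h13 : x₁ ≠ x₃) (h14 : x₁ ≠ x₄)
    (h23 : x₂ ≠ x₃) (h24 : x₂ ≠ x₄) (h34 : x₃ ≠ x₄)
    (ha1 : a < x₁) (ha2 : a < x₂) (ha3 : a < x₃) (ha4 : a < x₄)
    (hb1 : x₁ < b) (hb2 : x₂ < b) (hb3 : x₃ < b) (hb4 : x₄ < b)
    (hPa : 0 < P.eval a) (hPb : P.eval b < 0)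
    (hr1 : P.eval x₁ = 0) (hr2 : P.eval x₂ = 0) (hr3 : P.eval x₃ = 0)
    (hr4 : P.eval x₄ = 0) : False := by
  have hP0 : P ≠ 0 := by
    intro h
    rw [h] at hPa
    simp at hPa
  set m : Multiset ℝ := {x₁, x₂, x₃, x₄} with hm
  have hnodup : m.Nodup := by
    simp [hm, h12, h13, h14, h23, h24, h34]
  have hsub : m ⊆ P.roots := by
    intro x hx
    rw [Polynomial.mem_roots hP0]
    simp [hm] at hx
    rcases hx with rfl | rfl | rfl | rfl <;> assumption
  have hle : m ≤ P.roots := (Multiset.le_iff_subset hnodup).2 hsub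
  have hcardm : Multiset.card m = 4 := by simp [hm]
  have hcard : Multiset.card P.roots = 4 := by
    have h1 := Multiset.card_le_card hle
    have h2 := P.card_roots'
    omega
  have heq : P.roots = m := (Multiset.eq_of_le_of_card_le hle (by omega)).symm
  have hfact := Polynomial.C_leadingCoeff_mul_prod_multiset_X_sub_C
    (p := P) (by have := P.card_roots'; omega)
  rw [heq] at hfact
  set lc := P.leadingCoeff with hlc
  have heva : P.eval a = lc * ((a - x₁) * ((a - x₂) * ((a - x₃) * (a - x₄)))) := by
    conv_lhs => rw [← hfact]
    simp [hm, Multiset.prod_cons]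
  have hevb : P.eval b = lc * ((b - x₁) * ((b - x₂) * ((b - x₃) * (b - x₄)))) := by
    conv_lhs => rw [← hfact]
    simp [hm, Multiset.prod_cons]
  have n1 : a - x₁ < 0 := by linarith
  have n2 : a - x₂ < 0 := by linarith
  have n3 : a - x₃ < 0 := by linarith
  have n4 : a - x₄ < 0 := by linarith
  have i34 : 0 < (a - x₃) * (a - x₄) := mul_pos_of_neg_of_neg n3 n4
  have i234 : (a - x₂) * ((a - x₃) * (a - x₄)) < 0 := mul_neg_of_neg_of_pos n2 i34
  have hA : 0 < (a - x₁) * ((a - x₂) * ((a - x₃) * (a - x₄))) :=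
    mul_pos_of_neg_of_neg n1 i234
  have hB : 0 < (b - x₁) * ((b - x₂) * ((b - x₃) * (b - x₄))) := by
    have := mul_pos (sub_pos.2 hb3) (sub_pos.2 hb4)
    have := mul_pos (sub_pos.2 hb2) this
    exact mul_pos (sub_pos.2 hb1) this
  rw [heva] at hPa
  rw [hevb] at hPb
  nlinarith

set_option maxHeartbeats 1000000

open Set in
/-- The set of fixed points of `T(x,y) = (b₁x/(1+x+c₁y)+h₁, b₂y/(1+y+c₂x)+h₂)`
in `[0,∞)×[0,∞)` is nonempty, has at most three elements, and is totally
ordered by the south-east order `(x₁,y₁) ≤se (x₂,y₂) ↔ x₁ ≤ x₂ ∧ y₂ ≤ y₁`. -/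
theorem stmt13 (b₁ c₁ h₁ b₂ c₂ h₂ : ℝ)
    (hb₁ : 0 < b₁) (hc₁ : 0 < c₁) (hh₁ : 0 < h₁)
    (hb₂ : 0 < b₂) (hc₂ : 0 < c₂) (hh₂ : 0 < h₂)
    (T : ℝ × ℝ → ℝ × ℝ)
    (hT : ∀ x y, T (x, y) =
      (b₁ * x / (1 + x + c₁ * y) + h₁, b₂ * y / (1 + y + c₂ * x) + h₂))
    (E : Set (ℝ × ℝ))
    (hE : E = {p : ℝ × ℝ | p ∈ Ici (0:ℝ) ×ˢ Ici (0:ℝ) ∧ T p = p}) :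
    E.Nonempty ∧ E.encard ≤ 3 ∧
      ∀ p ∈ E, ∀ q ∈ E,
        (p.1 ≤ q.1 ∧ q.2 ≤ p.2) ∨ (q.1 ≤ p.1 ∧ p.2 ≤ q.2) := by
  obtain ⟨α, hα⟩ : ∃ a : ℝ, a = b₁ - 1 + h₁ - h₂ * c₁ := ⟨_, rfl⟩
  obtain ⟨β, hβ⟩ : ∃ a : ℝ, a = h₁ + h₁ * h₂ * c₁ := ⟨_, rfl⟩
  have hβpos : 0 < β := by rw [hβ]; positivity
  obtain ⟨s, hs⟩ : ∃ a : ℝ, a = Real.sqrt (α ^ 2 + 4 * β) := ⟨_, rfl⟩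
  obtain ⟨xb, hxb⟩ : ∃ a : ℝ, a = (α + s) / 2 := ⟨_, rfl⟩
  have hs2 : s ^ 2 = α ^ 2 + 4 * β := by
    rw [hs]; exact Real.sq_sqrt (by nlinarith [sq_nonneg α])
  have hsnn : 0 ≤ s := by rw [hs]; exact Real.sqrt_nonneg _
  have hαs : α < s := by nlinarith [sq_nonneg (s + α), sq_nonneg (s - α)]
  have hxbeq : xb ^ 2 = α * xb + β := by
    rw [hxb]; linear_combination hs2 / 4
  have hxbα : 0 < xb - α := by rw [hxb]; linarith
  have hxbh₁ : h₁ < xb := by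
    have key : (xb - h₁) * (h₁ + xb - α) = b₁ * h₁ := by
      rw [hα, hβ] at hxbeq
      rw [hα]
      linear_combination hxbeq
    nlinarith [mul_pos hb₁ hh₁]
  -- characterize members of E
  have hmemE : ∀ p ∈ E, h₁ < p.1 ∧ h₂ < p.2 ∧
      (p.1 - h₁) * (1 + p.1 + c₁ * p.2) = b₁ * p.1 ∧
      (p.2 - h₂) * (1 + p.2 + c₂ * p.1) = b₂ * p.2 := by
    intro p hp
    rw [hE] at hp
    obtain ⟨⟨hx0, hy0⟩, hfix⟩ := hp
    simp only [mem_Ici] at hx0 hy0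
    have hfix' : T (p.1, p.2) = p := by rw [Prod.mk.eta]; exact hfix
    rw [hT] at hfix'
    rw [Prod.ext_iff] at hfix'
    obtain ⟨h1, h2⟩ := hfix'
    have hd₁ : (0:ℝ) < 1 + p.1 + c₁ * p.2 := by nlinarith [mul_nonneg hc₁.le hy0]
    have hd₂ : (0:ℝ) < 1 + p.2 + c₂ * p.1 := by nlinarith [mul_nonneg hc₂.le hx0]
    have hx1 : p.1 - h₁ = b₁ * p.1 / (1 + p.1 + c₁ * p.2) := by linarith
    have hy1 : p.2 - h₂ = b₂ * p.2 / (1 + p.2 + c₂ * p.1) := by linarith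
    have hxh : h₁ ≤ p.1 := by
      have : 0 ≤ b₁ * p.1 / (1 + p.1 + c₁ * p.2) :=
        div_nonneg (mul_nonneg hb₁.le hx0) hd₁.le
      linarith
    have hxpos : 0 < p.1 := lt_of_lt_of_le hh₁ hxh
    have hxgt : h₁ < p.1 := by
      have : 0 < b₁ * p.1 / (1 + p.1 + c₁ * p.2) := div_pos (mul_pos hb₁ hxpos) hd₁
      linarith
    have hyh : h₂ ≤ p.2 := by
      have : 0 ≤ b₂ * p.2 / (1 + p.2 + c₂ * p.1) :=
        div_nonneg (mul_nonneg hb₂.le hy0) hd₂.le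
      linarith
    have hypos : 0 < p.2 := lt_of_lt_of_le hh₂ hyh
    have hygt : h₂ < p.2 := by
      have : 0 < b₂ * p.2 / (1 + p.2 + c₂ * p.1) := div_pos (mul_pos hb₂ hypos) hd₂
      linarith
    refine ⟨hxgt, hygt, ?_, ?_⟩
    · rw [hx1]; field_simp
    · rw [hy1]; field_simp
  -- south-east comparability
  have hkey : ∀ p ∈ E, ∀ q ∈ E, p.1 ≤ q.1 → q.2 ≤ p.2 := by
    intro p hp q hq hle
    by_contra hcon
    push_neg at hcon
    obtain ⟨hxp, hyp, hEp1, -⟩ := hmemE p hp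
    obtain ⟨hxq, hyq, hEq1, -⟩ := hmemE q hq
    have ep : (p.1 - h₁) * (1 + p.1 + c₁ * p.2 - b₁) = b₁ * h₁ := by
      linear_combination hEp1
    have eq' : (q.1 - h₁) * (1 + q.1 + c₁ * q.2 - b₁) = b₁ * h₁ := by
      linear_combination hEq1
    have hAp : 0 < 1 + p.1 + c₁ * p.2 - b₁ := by nlinarith [mul_pos hb₁ hh₁]
    have hcy : c₁ * p.2 < c₁ * q.2 := (mul_lt_mul_iff_right₀ hc₁).2 hcon
    have hApq : 1 + p.1 + c₁ * p.2 - b₁ < 1 + q.1 + c₁ * q.2 - b₁ := by linarith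
    have hlt : (p.1 - h₁) * (1 + p.1 + c₁ * p.2 - b₁) <
        (q.1 - h₁) * (1 + q.1 + c₁ * q.2 - b₁) :=
      mul_lt_mul' (by linarith) hApq hAp.le (by linarith)
    linarith [ep, eq', hlt]
  -- injectivity of first coordinate on E
  have hinj : Set.InjOn Prod.fst E := by
    intro p hp q hq hpq
    obtain ⟨hxp, -, hEp1, -⟩ := hmemE p hp
    obtain ⟨-, -, hEq1, -⟩ := hmemE q hq
    rw [← hpq] at hEq1
    have hne : c₁ * (p.1 - h₁) ≠ 0 := ne_of_gt (mul_pos hc₁ (by linarith))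
    have h2 : p.2 = q.2 := by
      have hmul : c₁ * (p.1 - h₁) * p.2 = c₁ * (p.1 - h₁) * q.2 := by
        linear_combination hEp1 - hEq1
      exact mul_left_cancel₀ hne hmul
    exact Prod.ext hpq h2
  -- the quartic
  obtain ⟨Qf, hQf⟩ : ∃ f : ℝ → ℝ, f = fun x => (b₁ * x - (x - h₁) * (1 + x)) ^ 2 +
      (b₁ * x - (x - h₁) * (1 + x)) * (c₁ * (x - h₁)) * (1 + c₂ * x - h₂ - b₂) -
      h₂ * (c₁ * (x - h₁)) ^ 2 * (1 + c₂ * x) := ⟨_, rfl⟩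
  have hQfx : ∀ x : ℝ, Qf x = (b₁ * x - (x - h₁) * (1 + x)) ^ 2 +
      (b₁ * x - (x - h₁) * (1 + x)) * (c₁ * (x - h₁)) * (1 + c₂ * x - h₂ - b₂) -
      h₂ * (c₁ * (x - h₁)) ^ 2 * (1 + c₂ * x) := fun x => by rw [hQf]
  -- every member's first coordinate is a root of Qf in (h₁, xb)
  have hroot : ∀ p ∈ E, Qf p.1 = 0 ∧ h₁ < p.1 ∧ p.1 < xb := by
    intro p hp
    obtain ⟨hxp, hyp, hEp1, hEp2⟩ := hmemE p hp
    have hE1' : c₁ * p.2 * (p.1 - h₁) = b₁ * p.1 - (p.1 - h₁) * (1 + p.1) := by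
      linear_combination hEp1
    have hQ0 : Qf p.1 = 0 := by
      rw [hQfx]
      linear_combination (c₁ * (p.1 - h₁)) ^ 2 * hEp2 -
        (c₁ * (p.1 - h₁) + c₂ * p.1 * (c₁ * (p.1 - h₁)) +
          (b₁ * p.1 - (p.1 - h₁) * (1 + p.1)) + c₁ * p.2 * (p.1 - h₁) -
          h₂ * (c₁ * (p.1 - h₁)) - b₂ * (c₁ * (p.1 - h₁))) * hE1'
    have hMpos : 0 < (xb - p.1) * (p.1 + xb - α) := by
      have hid : (xb - p.1) * (p.1 + xb - α) = c₁ * (p.1 - h₁) * (p.2 - h₂) := by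
        rw [hα, hβ] at hxbeq
        rw [hα]
        linear_combination hxbeq - hEp1
      rw [hid]
      exact mul_pos (mul_pos hc₁ (by linarith)) (by linarith)
    have hsum : 0 < p.1 + xb - α := by linarith
    have hlt : p.1 < xb := by
      by_contra hcon'
      push_neg at hcon'
      exact absurd hMpos
        (not_lt.2 (mul_nonpos_of_nonpos_of_nonneg (by linarith) hsum.le))
    exact ⟨hQ0, hxp, hlt⟩
  -- values of Qf at the endpoints
  have hQh₁ : 0 < Qf h₁ := by
    have h : Qf h₁ = (b₁ * h₁) ^ 2 := by rw [hQfx]; ring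
    rw [h]; positivity
  have hNxb : b₁ * xb - (xb - h₁) * (1 + xb) = h₂ * c₁ * (xb - h₁) := by
    rw [hα, hβ] at hxbeq
    linear_combination (-1 : ℝ) * hxbeq
  have hQxb : Qf xb < 0 := by
    have hval : Qf xb = -(b₂ * h₂ * c₁ ^ 2 * (xb - h₁) ^ 2) := by
      rw [hQfx]
      linear_combination ((b₁ * xb - (xb - h₁) * (1 + xb)) + h₂ * c₁ * (xb - h₁) +
        c₁ * (xb - h₁) * (1 + c₂ * xb - h₂ - b₂)) * hNxb
    rw [hval]
    have h2 : 0 < (xb - h₁) ^ 2 := pow_pos (by linarith) 2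
    have h3 : 0 < b₂ * h₂ * c₁ ^ 2 := by positivity
    nlinarith [mul_pos h3 h2]
  -- existence of a fixed point via IVT
  have hcont : ContinuousOn Qf (Icc h₁ xb) := by
    rw [hQf]; fun_prop
  have hIVT : (0:ℝ) ∈ Qf '' Ioo h₁ xb :=
    intermediate_value_Ioo' (le_of_lt hxbh₁) hcont ⟨hQxb, hQh₁⟩
  obtain ⟨x₀, hx₀mem, hx₀⟩ := hIVT
  obtain ⟨hx₀l, hx₀r⟩ := hx₀mem
  have hx₀pos : 0 < x₀ := lt_trans hh₁ hx₀l
  have hD : 0 < c₁ * (x₀ - h₁) := mul_pos hc₁ (by linarith)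
  have hMx₀ : 0 < (xb - x₀) * (x₀ + xb - α) :=
    mul_pos (by linarith) (by linarith)
  have hMid : (xb - x₀) * (x₀ + xb - α) =
      b₁ * x₀ - (x₀ - h₁) * (1 + x₀) - h₂ * c₁ * (x₀ - h₁) := by
    rw [hα, hβ] at hxbeq
    rw [hα]
    linear_combination hxbeq
  have hN : 0 < b₁ * x₀ - (x₀ - h₁) * (1 + x₀) := by
    have h1 : 0 < h₂ * c₁ * (x₀ - h₁) := by
      have := mul_pos (mul_pos hh₂ hc₁) (sub_pos.2 hx₀l); linarith
    nlinarith [hMx₀, hMid]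
  obtain ⟨y₀, hy₀⟩ : ∃ a : ℝ,
      a = (b₁ * x₀ - (x₀ - h₁) * (1 + x₀)) / (c₁ * (x₀ - h₁)) := ⟨_, rfl⟩
  have hy₀pos : 0 < y₀ := by rw [hy₀]; exact div_pos hN hD
  have hE1' : c₁ * y₀ * (x₀ - h₁) = b₁ * x₀ - (x₀ - h₁) * (1 + x₀) := by
    rw [hy₀]
    field_simp
  have hne : E.Nonempty := by
    refine ⟨(x₀, y₀), ?_⟩
    rw [hE]
    refine ⟨⟨le_of_lt hx₀pos, le_of_lt hy₀pos⟩, ?_⟩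
    rw [hT]
    have hd₁ : (0:ℝ) < 1 + x₀ + c₁ * y₀ := by nlinarith [mul_pos hc₁ hy₀pos]
    have hd₂ : (0:ℝ) < 1 + y₀ + c₂ * x₀ := by nlinarith [mul_pos hc₂ hx₀pos]
    have hc1 : b₁ * x₀ / (1 + x₀ + c₁ * y₀) + h₁ = x₀ := by
      rw [div_add' _ _ _ (ne_of_gt hd₁), div_eq_iff (ne_of_gt hd₁)]
      linear_combination (-1 : ℝ) * hE1'
    have he2 : (c₁ * (x₀ - h₁)) ^ 2 * ((y₀ - h₂) * (1 + y₀ + c₂ * x₀) - b₂ * y₀) = 0 := by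
      rw [hQfx] at hx₀
      linear_combination hx₀ + (c₁ * (x₀ - h₁) + c₂ * x₀ * (c₁ * (x₀ - h₁)) +
        (b₁ * x₀ - (x₀ - h₁) * (1 + x₀)) + c₁ * y₀ * (x₀ - h₁) -
        h₂ * (c₁ * (x₀ - h₁)) - b₂ * (c₁ * (x₀ - h₁))) * hE1'
    have he2' : (y₀ - h₂) * (1 + y₀ + c₂ * x₀) - b₂ * y₀ = 0 :=
      (mul_eq_zero.1 he2).resolve_left (pow_ne_zero 2 (ne_of_gt hD))
    have hc2 : b₂ * y₀ / (1 + y₀ + c₂ * x₀) + h₂ = y₀ := by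
      rw [div_add' _ _ _ (ne_of_gt hd₂), div_eq_iff (ne_of_gt hd₂)]
      linear_combination (-1 : ℝ) * he2'
    exact Prod.ext hc1 hc2
  -- the polynomial
  obtain ⟨QP, hQP⟩ : ∃ P : Polynomial ℝ, P = (Polynomial.C b₁ * Polynomial.X -
      (Polynomial.X - Polynomial.C h₁) * (1 + Polynomial.X)) ^ 2 +
      (Polynomial.C b₁ * Polynomial.X -
        (Polynomial.X - Polynomial.C h₁) * (1 + Polynomial.X)) *
        (Polynomial.C c₁ * (Polynomial.X - Polynomial.C h₁)) *
        (1 + Polynomial.C c₂ * Polynomial.X - Polynomial.C h₂ - Polynomial.C b₂) -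
      Polynomial.C h₂ * (Polynomial.C c₁ * (Polynomial.X - Polynomial.C h₁)) ^ 2 *
        (1 + Polynomial.C c₂ * Polynomial.X) := ⟨_, rfl⟩
  have hevalQP : ∀ x : ℝ, QP.eval x = Qf x := by
    intro x
    rw [hQP, hQfx x]
    simp only [Polynomial.eval_add, Polynomial.eval_sub, Polynomial.eval_mul,
      Polynomial.eval_pow, Polynomial.eval_C, Polynomial.eval_X, Polynomial.eval_one]
  have hdegQP : QP.natDegree ≤ 4 := by
    rw [hQP]
    compute_degree
  -- cardinality bound
  have hcard : E.encard ≤ 3 := by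
    by_contra hc
    push_neg at hc
    obtain ⟨t, hts, htcard⟩ := Set.exists_subset_encard_eq (le_of_lt hc)
    obtain ⟨p₁, p₂, p₃, hp12, hp13, hp23, rfl⟩ := Set.encard_eq_three.1 htcard
    have htne : ({p₁, p₂, p₃} : Set (ℝ × ℝ)) ≠ E := by
      intro h
      rw [← h, htcard] at hc
      exact lt_irrefl _ hc
    obtain ⟨p₄, hp₄E, hp₄t⟩ := Set.exists_of_ssubset (hts.ssubset_of_ne htne)
    simp only [Set.mem_insert_iff, Set.mem_singleton_iff, not_or] at hp₄t
    obtain ⟨hp41, hp42, hp43⟩ := hp₄t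
    have h1 := hroot p₁ (hts (by simp))
    have h2 := hroot p₂ (hts (by simp))
    have h3 := hroot p₃ (hts (by simp))
    have h4' := hroot p₄ hp₄E
    have hx12 : p₁.1 ≠ p₂.1 := fun h => hp12 (hinj (hts (by simp)) (hts (by simp)) h)
    have hx13 : p₁.1 ≠ p₃.1 := fun h => hp13 (hinj (hts (by simp)) (hts (by simp)) h)
    have hx23 : p₂.1 ≠ p₃.1 := fun h => hp23 (hinj (hts (by simp)) (hts (by simp)) h)
    have hx14 : p₁.1 ≠ p₄.1 := fun h => hp41 (hinj (hts (by simp)) hp₄E h).symm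
    have hx24 : p₂.1 ≠ p₄.1 := fun h => hp42 (hinj (hts (by simp)) hp₄E h).symm
    have hx34 : p₃.1 ≠ p₄.1 := fun h => hp43 (hinj (hts (by simp)) hp₄E h).symm
    exact no_four_roots QP hdegQP h₁ xb p₁.1 p₂.1 p₃.1 p₄.1
      hx12 hx13 hx14 hx23 hx24 hx34
      h1.2.1 h2.2.1 h3.2.1 h4'.2.1
      h1.2.2 h2.2.2 h3.2.2 h4'.2.2
      (by rw [hevalQP]; exact hQh₁) (by rw [hevalQP]; exact hQxb)
      (by rw [hevalQP]; exact h1.1) (by rw [hevalQP]; exact h2.1)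
      (by rw [hevalQP]; exact h3.1) (by rw [hevalQP]; exact h4'.1)
  refine ⟨hne, hcard, ?_⟩
  intro p hp q hq
  rcases le_total p.1 q.1 with h | h
  · exact Or.inl ⟨h, hkey p hp q hq h⟩
  · exact Or.inr ⟨h, hkey q hq p hp h⟩
end

section
/- Let b₁, c₁, h₁, b₂, c₂, h₂ be positive reals and define T on [0,∞)×[0,∞) by T(x,y) = (b₁·x/(1+x+c₁·y) + h₁, b₂·y/(1+y+c₂·x) + h₂). Suppose T has exactly one fixed point (x̄,ȳ) in [0,∞)×[0,∞). Then (x̄,ȳ) is globally asymptotically stable: (1) for every (x,y) ∈ [0,∞)×[0,∞), Tⁿ(x,y) → (x̄,ȳ) as n → ∞; and (2) for every ε > 0 there exists δ > 0 such that every (x,y) ∈ [0,∞)×[0,∞) with ‖(x,y) − (x̄,ȳ)‖ < δ satisfies ‖Tⁿ(x,y) − (x̄,ȳ)‖ < ε for all n ≥ 0. -/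
lemma stmt14_div_mono (b c : ℝ) (hb : 0 < b) (hc : 0 < c) {x x' y y' : ℝ}
    (hx : 0 ≤ x) (hy' : 0 ≤ y') (hxx : x ≤ x') (hyy : y' ≤ y) :
    b * x / (1 + x + c * y) ≤ b * x' / (1 + x' + c * y') := by
  have hy : 0 ≤ y := hy'.trans hyy
  have hx' : 0 ≤ x' := hx.trans hxx
  have d1 : 0 < 1 + x + c * y := by nlinarith
  have d2 : 0 < 1 + x' + c * y' := by nlinarith
  rw [div_le_div_iff₀ d1 d2]
  nlinarith [mul_le_mul_of_nonneg_left (mul_le_mul hxx hyy hy' hx') (mul_pos hb hc).le,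
    mul_le_mul_of_nonneg_left hxx hb.le]

lemma stmt14_bounds (b c : ℝ) (hb : 0 < b) (hc : 0 < c) {x y : ℝ}
    (hx : 0 ≤ x) (hy : 0 ≤ y) :
    0 ≤ b * x / (1 + x + c * y) ∧ b * x / (1 + x + c * y) ≤ b := by
  have d1 : 0 < 1 + x + c * y := by nlinarith
  constructor
  · positivity
  · rw [div_le_iff₀ d1]
    nlinarith [mul_nonneg (mul_nonneg hb.le hc.le) hy]

open Set Filter in
/-- If the map `T(x,y) = (b₁x/(1+x+c₁y)+h₁, b₂y/(1+y+c₂x)+h₂)` has exactly one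
fixed point `(xs,ys)` in `[0,∞)×[0,∞)`, then it is globally asymptotically
stable: all orbits starting in `[0,∞)×[0,∞)` converge to it, and it is
Lyapunov stable. -/
theorem stmt14 (b₁ c₁ h₁ b₂ c₂ h₂ : ℝ)
    (hb₁ : 0 < b₁) (hc₁ : 0 < c₁) (hh₁ : 0 < h₁)
    (hb₂ : 0 < b₂) (hc₂ : 0 < c₂) (hh₂ : 0 < h₂)
    (T : ℝ × ℝ → ℝ × ℝ)
    (hT : ∀ x y, T (x, y) =
      (b₁ * x / (1 + x + c₁ * y) + h₁, b₂ * y / (1 + y + c₂ * x) + h₂))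
    (xs ys : ℝ) (hxs : 0 ≤ xs) (hys : 0 ≤ ys)
    (hfix : T (xs, ys) = (xs, ys))
    (huniq : ∀ p ∈ Ici (0:ℝ) ×ˢ Ici (0:ℝ), T p = p → p = (xs, ys)) :
    (∀ p ∈ Ici (0:ℝ) ×ˢ Ici (0:ℝ),
      Tendsto (fun n => T^[n] p) atTop (nhds (xs, ys))) ∧
    (∀ ε > 0, ∃ δ > 0, ∀ p ∈ Ici (0:ℝ) ×ˢ Ici (0:ℝ),
      ‖p - (xs, ys)‖ < δ → ∀ n : ℕ, ‖T^[n] p - (xs, ys)‖ < ε) := by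
  have hT' : ∀ p : ℝ × ℝ,
      T p = (b₁ * p.1 / (1 + p.1 + c₁ * p.2) + h₁,
             b₂ * p.2 / (1 + p.2 + c₂ * p.1) + h₂) := fun p => by
    rcases p with ⟨x, y⟩; exact hT x y
  -- continuity of T at nonnegative points
  have contT : ∀ u v : ℝ, 0 ≤ u → 0 ≤ v → ContinuousAt T (u, v) := by
    intro u v hu hv
    have hTe : T = fun p : ℝ × ℝ =>
        (b₁ * p.1 / (1 + p.1 + c₁ * p.2) + h₁,
         b₂ * p.2 / (1 + p.2 + c₂ * p.1) + h₂) := funext hT'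
    rw [hTe]
    have d1 : (1 + u + c₁ * v : ℝ) ≠ 0 := by nlinarith
    have d2 : (1 + v + c₂ * u : ℝ) ≠ 0 := by nlinarith
    apply ContinuousAt.prodMk
    · exact (((continuousAt_const.mul continuousAt_fst).div
        ((continuousAt_const.add continuousAt_fst).add
          (continuousAt_const.mul continuousAt_snd)) d1).add continuousAt_const)
    · exact (((continuousAt_const.mul continuousAt_snd).div
        ((continuousAt_const.add continuousAt_snd).add
          (continuousAt_const.mul continuousAt_fst)) d2).add continuousAt_const)
  -- T maps the quadrant into the box
  have hmap : ∀ p : ℝ × ℝ, 0 ≤ p.1 → 0 ≤ p.2 →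
      h₁ ≤ (T p).1 ∧ (T p).1 ≤ b₁ + h₁ ∧ h₂ ≤ (T p).2 ∧ (T p).2 ≤ b₂ + h₂ := by
    intro p h1 h2
    rw [hT' p]; dsimp only
    obtain ⟨l1, u1⟩ := stmt14_bounds b₁ c₁ hb₁ hc₁ h1 h2
    obtain ⟨l2, u2⟩ := stmt14_bounds b₂ c₂ hb₂ hc₂ h2 h1
    exact ⟨by linarith, by linarith, by linarith, by linarith⟩
  -- T is monotone for the southeast order
  have hmono : ∀ p q : ℝ × ℝ, 0 ≤ p.1 → 0 ≤ q.2 → p.1 ≤ q.1 → q.2 ≤ p.2 →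
      (T p).1 ≤ (T q).1 ∧ (T q).2 ≤ (T p).2 := by
    intro p q hp1 hq2 h1 h2
    rw [hT' p, hT' q]; dsimp only
    constructor
    · have := stmt14_div_mono b₁ c₁ hb₁ hc₁ hp1 hq2 h1 h2; linarith
    · have := stmt14_div_mono b₂ c₂ hb₂ hc₂ hq2 hp1 h2 h1; linarith
  -- the two extremal orbits
  set P : ℕ → ℝ × ℝ := fun n => T^[n] (h₁, b₂ + h₂) with hPdef
  set Q : ℕ → ℝ × ℝ := fun n => T^[n] (b₁ + h₁, h₂) with hQdef
  have hPsucc : ∀ n, P (n + 1) = T (P n) := fun n => Function.iterate_succ_apply' T n _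
  have hQsucc : ∀ n, Q (n + 1) = T (Q n) := fun n => Function.iterate_succ_apply' T n _
  have hP0 : P 0 = (h₁, b₂ + h₂) := rfl
  have hQ0 : Q 0 = (b₁ + h₁, h₂) := rfl
  -- box bounds for the extremal orbits
  have hA : ∀ n, h₁ ≤ (P n).1 ∧ (P n).1 ≤ b₁ + h₁ ∧ h₂ ≤ (P n).2 ∧ (P n).2 ≤ b₂ + h₂ := by
    intro n; induction n with
    | zero => refine ⟨?_, ?_, ?_, ?_⟩ <;> rw [hP0] <;> dsimp only <;> linarith
    | succ n ih =>
      rw [hPsucc n]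
      exact hmap (P n) (by linarith [ih.1]) (by linarith [ih.2.2.1])
  have hB : ∀ n, h₁ ≤ (Q n).1 ∧ (Q n).1 ≤ b₁ + h₁ ∧ h₂ ≤ (Q n).2 ∧ (Q n).2 ≤ b₂ + h₂ := by
    intro n; induction n with
    | zero => refine ⟨?_, ?_, ?_, ?_⟩ <;> rw [hQ0] <;> dsimp only <;> linarith
    | succ n ih =>
      rw [hQsucc n]
      exact hmap (Q n) (by linarith [ih.1]) (by linarith [ih.2.2.1])
  -- monotonicity of the extremal orbits
  have hAm : ∀ n, (P n).1 ≤ (P (n + 1)).1 ∧ (P (n + 1)).2 ≤ (P n).2 := by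
    intro n; induction n with
    | zero =>
      have := hmap (P 0) (by rw [hP0]; exact hh₁.le) (by rw [hP0]; dsimp only; positivity)
      rw [hPsucc 0]
      exact ⟨by rw [hP0] at this ⊢; exact this.1, by rw [hP0] at this ⊢; exact this.2.2.2⟩
    | succ n ih =>
      have h := hmono (P n) (P (n + 1)) (by linarith [(hA n).1])
        (by linarith [(hA (n+1)).2.2.1]) ih.1 ih.2
      rw [← hPsucc (n + 1), ← hPsucc n] at h
      exact h
  have hBm : ∀ n, (Q (n + 1)).1 ≤ (Q n).1 ∧ (Q n).2 ≤ (Q (n + 1)).2 := by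
    intro n; induction n with
    | zero =>
      have := hmap (Q 0) (by rw [hQ0]; dsimp only; positivity) (by rw [hQ0]; exact hh₂.le)
      rw [hQsucc 0]
      exact ⟨by rw [hQ0] at this ⊢; exact this.2.1, by rw [hQ0] at this ⊢; exact this.2.2.1⟩
    | succ n ih =>
      have h := hmono (Q (n + 1)) (Q n) (by linarith [(hB (n+1)).1])
        (by linarith [(hB n).2.2.1]) ih.1 ih.2
      rw [← hQsucc (n + 1), ← hQsucc n] at h
      exact h
  -- sandwich: every orbit starting in the box is squeezed between P and Q
  have hS : ∀ p : ℝ × ℝ, h₁ ≤ p.1 → p.1 ≤ b₁ + h₁ → h₂ ≤ p.2 → p.2 ≤ b₂ + h₂ → ∀ n,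
      (P n).1 ≤ (T^[n] p).1 ∧ (T^[n] p).1 ≤ (Q n).1 ∧
      (Q n).2 ≤ (T^[n] p).2 ∧ (T^[n] p).2 ≤ (P n).2 := by
    intro p hp1 hp2 hp3 hp4 n
    induction n with
    | zero =>
      simp only [Function.iterate_zero, id_eq]
      rw [hP0, hQ0]
      exact ⟨hp1, hp2, hp3, hp4⟩
    | succ n ih =>
      have hx1 : 0 ≤ (T^[n] p).1 := le_trans (by linarith [(hA n).1]) ih.1
      have hx2 : 0 ≤ (T^[n] p).2 := le_trans (by linarith [(hB n).2.2.1]) ih.2.2.1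
      have e : T^[n + 1] p = T (T^[n] p) := Function.iterate_succ_apply' T n p
      rw [e, hPsucc n, hQsucc n]
      have m1 := hmono (P n) (T^[n] p) (by linarith [(hA n).1]) hx2 ih.1 ih.2.2.2
      have m2 := hmono (T^[n] p) (Q n) hx1 (by linarith [(hB n).2.2.1]) ih.2.1 ih.2.2.1
      exact ⟨m1.1, m2.1, m2.2, m1.2⟩
  -- limits of the extremal orbits
  have hMono1 : Monotone fun n => (P n).1 := monotone_nat_of_le_succ fun n => (hAm n).1
  have hAnti2 : Antitone fun n => (P n).2 := antitone_nat_of_succ_le fun n => (hAm n).2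
  have hAnti1 : Antitone fun n => (Q n).1 := antitone_nat_of_succ_le fun n => (hBm n).1
  have hMono2 : Monotone fun n => (Q n).2 := monotone_nat_of_le_succ fun n => (hBm n).2
  have hBdd1 : BddAbove (Set.range fun n => (P n).1) :=
    ⟨b₁ + h₁, by rintro _ ⟨n, rfl⟩; exact (hA n).2.1⟩
  have hBdd2 : BddBelow (Set.range fun n => (P n).2) :=
    ⟨h₂, by rintro _ ⟨n, rfl⟩; exact (hA n).2.2.1⟩
  have hBdd3 : BddBelow (Set.range fun n => (Q n).1) :=
    ⟨h₁, by rintro _ ⟨n, rfl⟩; exact (hB n).1⟩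
  have hBdd4 : BddAbove (Set.range fun n => (Q n).2) :=
    ⟨b₂ + h₂, by rintro _ ⟨n, rfl⟩; exact (hB n).2.2.2⟩
  have hL1 : Tendsto (fun n => (P n).1) atTop (nhds (⨆ n, (P n).1)) :=
    tendsto_atTop_ciSup hMono1 hBdd1
  have hL2 : Tendsto (fun n => (P n).2) atTop (nhds (⨅ n, (P n).2)) :=
    tendsto_atTop_ciInf hAnti2 hBdd2
  have hM1 : Tendsto (fun n => (Q n).1) atTop (nhds (⨅ n, (Q n).1)) :=
    tendsto_atTop_ciInf hAnti1 hBdd3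
  have hM2 : Tendsto (fun n => (Q n).2) atTop (nhds (⨆ n, (Q n).2)) :=
    tendsto_atTop_ciSup hMono2 hBdd4
  -- each limit is a fixed point, hence equals (xs, ys)
  have key : ∀ (R : ℕ → ℝ × ℝ) (L1 L2 : ℝ), (∀ n, R (n + 1) = T (R n)) →
      (∀ n, h₁ ≤ (R n).1) → (∀ n, h₂ ≤ (R n).2) →
      Tendsto (fun n => (R n).1) atTop (nhds L1) →
      Tendsto (fun n => (R n).2) atTop (nhds L2) →
      L1 = xs ∧ L2 = ys := by
    intro R L1 L2 hRs hR1 hR2 t1 t2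
    have hRlim : Tendsto R atTop (nhds (L1, L2)) := by
      have := t1.prodMk_nhds t2
      simpa using this
    have hL1nn : 0 ≤ L1 := le_of_tendsto_of_tendsto' tendsto_const_nhds t1
      (fun n => by linarith [hR1 n])
    have hL2nn : 0 ≤ L2 := le_of_tendsto_of_tendsto' tendsto_const_nhds t2
      (fun n => by linarith [hR2 n])
    have hshift : Tendsto (fun n => R (n + 1)) atTop (nhds (L1, L2)) :=
      hRlim.comp (tendsto_add_atTop_nat 1)
    have hTlim : Tendsto (fun n => T (R n)) atTop (nhds (T (L1, L2))) :=
      ((contT L1 L2 hL1nn hL2nn).tendsto).comp hRlim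
    have heq : (fun n => R (n + 1)) = fun n => T (R n) := funext fun n => hRs n
    rw [heq] at hshift
    have hfp : T (L1, L2) = (L1, L2) := tendsto_nhds_unique hTlim hshift
    have := huniq (L1, L2) (by
      constructor <;> simp [Set.mem_Ici, hL1nn, hL2nn]) hfp
    exact ⟨congrArg Prod.fst this, congrArg Prod.snd this⟩
  obtain ⟨eP1, eP2⟩ := key P _ _ hPsucc (fun n => (hA n).1) (fun n => (hA n).2.2.1) hL1 hL2
  obtain ⟨eQ1, eQ2⟩ := key Q _ _ hQsucc (fun n => (hB n).1) (fun n => (hB n).2.2.1) hM1 hM2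
  rw [eP1] at hL1; rw [eP2] at hL2; rw [eQ1] at hM1; rw [eQ2] at hM2
  -- attraction
  have hAtt : ∀ p : ℝ × ℝ, 0 ≤ p.1 → 0 ≤ p.2 →
      Tendsto (fun n => T^[n] p) atTop (nhds (xs, ys)) := by
    intro p hp1 hp2
    obtain ⟨hq1, hq2, hq3, hq4⟩ := hmap p hp1 hp2
    have hS' := hS (T p) hq1 hq2 hq3 hq4
    have t1 : Tendsto (fun n => (T^[n] (T p)).1) atTop (nhds xs) :=
      tendsto_of_tendsto_of_tendsto_of_le_of_le hL1 hM1
        (fun n => (hS' n).1) (fun n => (hS' n).2.1)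
    have t2 : Tendsto (fun n => (T^[n] (T p)).2) atTop (nhds ys) :=
      tendsto_of_tendsto_of_tendsto_of_le_of_le hM2 hL2
        (fun n => (hS' n).2.2.1) (fun n => (hS' n).2.2.2)
    have tp : Tendsto (fun n => T^[n] (T p)) atTop (nhds (xs, ys)) := by
      have := t1.prodMk_nhds t2
      simpa using this
    have : Tendsto (fun n => T^[n + 1] p) atTop (nhds (xs, ys)) := by
      have e : (fun n => T^[n + 1] p) = fun n => T^[n] (T p) :=
        funext fun n => Function.iterate_succ_apply T n p
      rw [e]; exact tp
    exact (tendsto_add_atTop_iff_nat 1).mp this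
  -- norm as max of coordinate distances
  have hnorm : ∀ (v : ℝ × ℝ), ‖v - (xs, ys)‖ = max |v.1 - xs| |v.2 - ys| := by
    intro v
    rw [Prod.norm_def]
    simp [Real.norm_eq_abs, Prod.fst_sub, Prod.snd_sub]
  -- uniform attraction
  have hU : ∀ ε > (0:ℝ), ∃ N : ℕ, ∀ n ≥ N, ∀ p : ℝ × ℝ, 0 ≤ p.1 → 0 ≤ p.2 →
      ‖T^[n] p - (xs, ys)‖ < ε := by
    intro ε hε
    obtain ⟨N₁, hN₁⟩ := (Metric.tendsto_atTop.mp hL1) ε hε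
    obtain ⟨N₂, hN₂⟩ := (Metric.tendsto_atTop.mp hL2) ε hε
    obtain ⟨N₃, hN₃⟩ := (Metric.tendsto_atTop.mp hM1) ε hε
    obtain ⟨N₄, hN₄⟩ := (Metric.tendsto_atTop.mp hM2) ε hε
    refine ⟨max (max N₁ N₂) (max N₃ N₄) + 1, ?_⟩
    intro n hn p hp1 hp2
    obtain ⟨m, rfl⟩ : ∃ m, n = m + 1 := ⟨n - 1, by omega⟩
    have hm : max (max N₁ N₂) (max N₃ N₄) ≤ m := by omega
    have d1 : |(P m).1 - xs| < ε := by
      have := hN₁ m (by omega); rwa [Real.dist_eq] at this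
    have d2 : |(P m).2 - ys| < ε := by
      have := hN₂ m (by omega); rwa [Real.dist_eq] at this
    have d3 : |(Q m).1 - xs| < ε := by
      have := hN₃ m (by omega); rwa [Real.dist_eq] at this
    have d4 : |(Q m).2 - ys| < ε := by
      have := hN₄ m (by omega); rwa [Real.dist_eq] at this
    obtain ⟨hq1, hq2, hq3, hq4⟩ := hmap p hp1 hp2
    have hS' := hS (T p) hq1 hq2 hq3 hq4 m
    have e : T^[m + 1] p = T^[m] (T p) := Function.iterate_succ_apply T m p
    rw [e, hnorm]
    rw [abs_lt] at d1 d2 d3 d4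
    apply max_lt
    · rw [abs_lt]; constructor <;> [linarith [hS'.1]; linarith [hS'.2.1]]
    · rw [abs_lt]; constructor <;> [linarith [hS'.2.2.1]; linarith [hS'.2.2.2]]
  -- continuity of iterates at the fixed point
  have hCiter : ∀ n : ℕ, ContinuousAt (T^[n]) (xs, ys) := by
    intro n; induction n with
    | zero => simpa using continuousAt_id
    | succ n ih =>
      rw [Function.iterate_succ']
      have hfixn : T^[n] (xs, ys) = (xs, ys) := Function.iterate_fixed hfix n
      exact ContinuousAt.comp (by rw [hfixn]; exact contT xs ys hxs hys) ih
  -- finite-time stability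
  have hC : ∀ ε > (0:ℝ), ∀ N : ℕ, ∃ δ > (0:ℝ), ∀ p : ℝ × ℝ,
      ‖p - (xs, ys)‖ < δ → ∀ n < N, ‖T^[n] p - (xs, ys)‖ < ε := by
    intro ε hε N
    induction N with
    | zero => exact ⟨1, one_pos, fun p _ n hn => absurd hn (Nat.not_lt_zero n)⟩
    | succ N ih =>
      obtain ⟨δ, hδ, hδp⟩ := ih
      obtain ⟨δ', hδ', hδ'p⟩ := Metric.continuousAt_iff.mp (hCiter N) ε hε
      refine ⟨min δ δ', lt_min hδ hδ', fun p hp n hn => ?_⟩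
      rcases Nat.lt_succ_iff_lt_or_eq.mp hn with h | rfl
      · exact hδp p (lt_of_lt_of_le hp (min_le_left _ _)) n h
      · have hd : dist p (xs, ys) < δ' := by
          rw [dist_eq_norm]; exact lt_of_lt_of_le hp (min_le_right _ _)
        have := hδ'p hd
        rw [Function.iterate_fixed hfix n, dist_eq_norm] at this
        exact this
  constructor
  · rintro ⟨x, y⟩ hp
    exact hAtt (x, y) hp.1 hp.2
  · intro ε hε
    obtain ⟨N, hN⟩ := hU ε hε
    obtain ⟨δ, hδ, hδp⟩ := hC ε hε N
    refine ⟨δ, hδ, fun p hp hpn n => ?_⟩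
    rcases lt_or_ge n N with h | h
    · exact hδp p hpn n h
    · exact hN n h p hp.1 hp.2
end

section
/- Let a ≤ b and c ≤ d be real numbers, and let f : [a,b]×[c,d] → [a,b] and g : [a,b]×[c,d] → [c,d] be continuous functions such that (i) f(x,y) is non-decreasing in x and non-increasing in y, and g(x,y) is non-decreasing in y and non-increasing in x, and (ii) whenever m, M ∈ [a,b] and m̄, M̄ ∈ [c,d] satisfy m = f(m, M̄), M = f(M, m̄), m̄ = g(M, m̄), and M̄ = g(m, M̄), it follows that m = M and m̄ = M̄. Then the map T(x,y) = (f(x,y), g(x,y)) has a unique fixed point (x̄,ȳ) in [a,b]×[c,d], and for every (x₀,y₀) ∈ [a,b]×[c,d] the iterates Tⁿ(x₀,y₀) converge to (x̄,ȳ) as n → ∞. -/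
/-- One step of the M−m iteration. -/
def mmStep17 (f g : ℝ → ℝ → ℝ) (p : (ℝ × ℝ) × ℝ × ℝ) : (ℝ × ℝ) × ℝ × ℝ :=
  ((f p.1.1 p.2.2, f p.1.2 p.2.1), (g p.1.2 p.2.1, g p.1.1 p.2.2))

open Set Filter in
/-- M−m global attractivity theorem for competitive planar systems on a
rectangle: if `f : [a,b]×[c,d] → [a,b]` and `g : [a,b]×[c,d] → [c,d]` are
continuous, `f` is non-decreasing in `x` and non-increasing in `y`, `g` is
non-decreasing in `y` and non-increasing in `x`, and the only solutions of the
M−m system are diagonal, then `T = (f,g)` has a unique fixed point in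
`[a,b]×[c,d]` which attracts all orbits. -/
theorem stmt17 (a b c d : ℝ) (hab : a ≤ b) (hcd : c ≤ d)
    (f g : ℝ → ℝ → ℝ)
    (hfmaps : ∀ x ∈ Icc a b, ∀ y ∈ Icc c d, f x y ∈ Icc a b)
    (hgmaps : ∀ x ∈ Icc a b, ∀ y ∈ Icc c d, g x y ∈ Icc c d)
    (hfcont : ContinuousOn (fun p : ℝ × ℝ => f p.1 p.2) (Icc a b ×ˢ Icc c d))
    (hgcont : ContinuousOn (fun p : ℝ × ℝ => g p.1 p.2) (Icc a b ×ˢ Icc c d))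
    (hfx : ∀ y ∈ Icc c d, MonotoneOn (fun x => f x y) (Icc a b))
    (hfy : ∀ x ∈ Icc a b, AntitoneOn (fun y => f x y) (Icc c d))
    (hgy : ∀ x ∈ Icc a b, MonotoneOn (fun y => g x y) (Icc c d))
    (hgx : ∀ y ∈ Icc c d, AntitoneOn (fun x => g x y) (Icc a b))
    (hMm : ∀ m ∈ Icc a b, ∀ M ∈ Icc a b, ∀ mb ∈ Icc c d, ∀ Mb ∈ Icc c d,
      m = f m Mb → M = f M mb → mb = g M mb → Mb = g m Mb →
      m = M ∧ mb = Mb)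
    (T : ℝ × ℝ → ℝ × ℝ) (hT : ∀ p : ℝ × ℝ, T p = (f p.1 p.2, g p.1 p.2)) :
    ∃ p : ℝ × ℝ, p ∈ Icc a b ×ˢ Icc c d ∧ T p = p ∧
      (∀ q ∈ Icc a b ×ˢ Icc c d, T q = q → q = p) ∧
      (∀ q ∈ Icc a b ×ˢ Icc c d,
        Tendsto (fun n => T^[n] q) atTop (nhds p)) := by
  set S : ℕ → (ℝ × ℝ) × ℝ × ℝ := fun n => (mmStep17 f g)^[n] ((a, b), (c, d)) with hSdef
  set m : ℕ → ℝ := fun n => (S n).1.1 with hmdef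
  set M : ℕ → ℝ := fun n => (S n).1.2 with hMdef
  set mb : ℕ → ℝ := fun n => (S n).2.1 with hmbdef
  set Mb : ℕ → ℝ := fun n => (S n).2.2 with hMbdef
  have hm0 : m 0 = a := rfl
  have hM0 : M 0 = b := rfl
  have hmb0 : mb 0 = c := rfl
  have hMb0 : Mb 0 = d := rfl
  have hSsucc : ∀ n, S (n + 1) = mmStep17 f g (S n) := fun n =>
    Function.iterate_succ_apply' (mmStep17 f g) n _
  have hmrec : ∀ n, m (n + 1) = f (m n) (Mb n) := fun n => by
    simp only [hmdef, hSsucc n, mmStep17]; rfl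
  have hMrec : ∀ n, M (n + 1) = f (M n) (mb n) := fun n => by
    simp only [hMdef, hSsucc n, mmStep17]; rfl
  have hmbrec : ∀ n, mb (n + 1) = g (M n) (mb n) := fun n => by
    simp only [hmbdef, hSsucc n, mmStep17]; rfl
  have hMbrec : ∀ n, Mb (n + 1) = g (m n) (Mb n) := fun n => by
    simp only [hMbdef, hSsucc n, mmStep17]; rfl
  -- Invariant: all terms stay in the rectangle and are ordered
  have hQ : ∀ n, m n ∈ Icc a b ∧ M n ∈ Icc a b ∧ m n ≤ M n ∧
      mb n ∈ Icc c d ∧ Mb n ∈ Icc c d ∧ mb n ≤ Mb n := by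
    intro n
    induction n with
    | zero =>
      refine ⟨?_, ?_, ?_, ?_, ?_, ?_⟩ <;>
        simp [hm0, hM0, hmb0, hMb0, hab, hcd, left_mem_Icc, right_mem_Icc]
    | succ n ih =>
      obtain ⟨hm, hM, hmM, hmb, hMb, hmbMb⟩ := ih
      have h1 : m (n + 1) ∈ Icc a b := by rw [hmrec]; exact hfmaps _ hm _ hMb
      have h2 : M (n + 1) ∈ Icc a b := by rw [hMrec]; exact hfmaps _ hM _ hmb
      have h4 : mb (n + 1) ∈ Icc c d := by rw [hmbrec]; exact hgmaps _ hM _ hmb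
      have h5 : Mb (n + 1) ∈ Icc c d := by rw [hMbrec]; exact hgmaps _ hm _ hMb
      have h3 : m (n + 1) ≤ M (n + 1) := by
        rw [hmrec, hMrec]
        calc f (m n) (Mb n) ≤ f (M n) (Mb n) := hfx _ hMb hm hM hmM
          _ ≤ f (M n) (mb n) := hfy _ hM hmb hMb hmbMb
      have h6 : mb (n + 1) ≤ Mb (n + 1) := by
        rw [hmbrec, hMbrec]
        calc g (M n) (mb n) ≤ g (m n) (mb n) := hgx _ hmb hm hM hmM
          _ ≤ g (m n) (Mb n) := hgy _ hm hmb hMb hmbMb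
      exact ⟨h1, h2, h3, h4, h5, h6⟩
  -- Monotonicity of the four sequences
  have hR : ∀ n, m n ≤ m (n + 1) ∧ M (n + 1) ≤ M n ∧
      mb n ≤ mb (n + 1) ∧ Mb (n + 1) ≤ Mb n := by
    intro n
    induction n with
    | zero =>
      refine ⟨?_, ?_, ?_, ?_⟩
      · rw [hm0]; exact ((hQ 1).1).1
      · rw [hM0]; exact ((hQ 1).2.1).2
      · rw [hmb0]; exact ((hQ 1).2.2.2.1).1
      · rw [hMb0]; exact ((hQ 1).2.2.2.2.1).2
    | succ n ih =>
      obtain ⟨hm1, hM1, hmb1, hMb1⟩ := ih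
      obtain ⟨hm, hM, _, hmb, hMb, _⟩ := hQ n
      obtain ⟨hm', hM', _, hmb', hMb', _⟩ := hQ (n + 1)
      refine ⟨?_, ?_, ?_, ?_⟩
      · rw [hmrec n, hmrec (n + 1)]
        calc f (m n) (Mb n) ≤ f (m (n + 1)) (Mb n) := hfx _ hMb hm hm' hm1
          _ ≤ f (m (n + 1)) (Mb (n + 1)) := hfy _ hm' hMb' hMb hMb1
      · rw [hMrec n, hMrec (n + 1)]
        calc f (M (n + 1)) (mb (n + 1)) ≤ f (M n) (mb (n + 1)) := hfx _ hmb' hM' hM hM1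
          _ ≤ f (M n) (mb n) := hfy _ hM hmb hmb' hmb1
      · rw [hmbrec n, hmbrec (n + 1)]
        calc g (M n) (mb n) ≤ g (M (n + 1)) (mb n) := hgx _ hmb hM' hM hM1
          _ ≤ g (M (n + 1)) (mb (n + 1)) := hgy _ hM' hmb hmb' hmb1
      · rw [hMbrec n, hMbrec (n + 1)]
        calc g (m (n + 1)) (Mb (n + 1)) ≤ g (m n) (Mb (n + 1)) := hgx _ hMb' hm hm' hm1
          _ ≤ g (m n) (Mb n) := hgy _ hm hMb' hMb hMb1
  have hm_mono : Monotone m := monotone_nat_of_le_succ fun n => (hR n).1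
  have hM_anti : Antitone M := antitone_nat_of_succ_le fun n => (hR n).2.1
  have hmb_mono : Monotone mb := monotone_nat_of_le_succ fun n => (hR n).2.2.1
  have hMb_anti : Antitone Mb := antitone_nat_of_succ_le fun n => (hR n).2.2.2
  -- Limits
  have hm_bdd : BddAbove (Set.range m) := ⟨b, by rintro _ ⟨n, rfl⟩; exact ((hQ n).1).2⟩
  have hM_bdd : BddBelow (Set.range M) := ⟨a, by rintro _ ⟨n, rfl⟩; exact ((hQ n).2.1).1⟩
  have hmb_bdd : BddAbove (Set.range mb) := ⟨d, by rintro _ ⟨n, rfl⟩; exact ((hQ n).2.2.2.1).2⟩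
  have hMb_bdd : BddBelow (Set.range Mb) := ⟨c, by rintro _ ⟨n, rfl⟩; exact ((hQ n).2.2.2.2.1).1⟩
  set L1 : ℝ := ⨆ n, m n with hL1
  set L2 : ℝ := ⨅ n, M n with hL2
  set L3 : ℝ := ⨆ n, mb n with hL3
  set L4 : ℝ := ⨅ n, Mb n with hL4
  have hmL : Tendsto m atTop (nhds L1) := tendsto_atTop_ciSup hm_mono hm_bdd
  have hML : Tendsto M atTop (nhds L2) := tendsto_atTop_ciInf hM_anti hM_bdd
  have hmbL : Tendsto mb atTop (nhds L3) := tendsto_atTop_ciSup hmb_mono hmb_bdd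
  have hMbL : Tendsto Mb atTop (nhds L4) := tendsto_atTop_ciInf hMb_anti hMb_bdd
  have hL1mem : L1 ∈ Icc a b :=
    ⟨le_trans (le_of_eq hm0.symm) (le_ciSup hm_bdd 0),
      ciSup_le fun n => ((hQ n).1).2⟩
  have hL2mem : L2 ∈ Icc a b :=
    ⟨le_ciInf fun n => ((hQ n).2.1).1,
      le_trans (ciInf_le hM_bdd 0) (le_of_eq hM0)⟩
  have hL3mem : L3 ∈ Icc c d :=
    ⟨le_trans (le_of_eq hmb0.symm) (le_ciSup hmb_bdd 0),
      ciSup_le fun n => ((hQ n).2.2.2.1).2⟩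
  have hL4mem : L4 ∈ Icc c d :=
    ⟨le_ciInf fun n => ((hQ n).2.2.2.2.1).1,
      le_trans (ciInf_le hMb_bdd 0) (le_of_eq hMb0)⟩
  -- The limits satisfy the M−m system, via continuity
  have key : ∀ (u v : ℕ → ℝ) (Lu : ℝ) (Lv : ℝ), Tendsto u atTop (nhds Lu) →
      Tendsto v atTop (nhds Lv) → (∀ n, u n ∈ Icc a b) → (∀ n, v n ∈ Icc c d) →
      Lu ∈ Icc a b → Lv ∈ Icc c d →
      Tendsto (fun n => f (u n) (v n)) atTop (nhds (f Lu Lv)) ∧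
      Tendsto (fun n => g (u n) (v n)) atTop (nhds (g Lu Lv)) := by
    intro u v Lu Lv hu hv hum hvm hLu hLv
    have huv : Tendsto (fun n => ((u n, v n) : ℝ × ℝ)) atTop
        (nhdsWithin (Lu, Lv) (Icc a b ×ˢ Icc c d)) := by
      apply tendsto_nhdsWithin_of_tendsto_nhds_of_eventually_within
      · exact hu.prodMk_nhds hv
      · exact Eventually.of_forall fun n => ⟨hum n, hvm n⟩
    constructor
    · exact ((hfcont (Lu, Lv) ⟨hLu, hLv⟩).tendsto).comp huv
    · exact ((hgcont (Lu, Lv) ⟨hLu, hLv⟩).tendsto).comp huv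
  have heq1 : L1 = f L1 L4 := by
    have h1 : Tendsto (fun n => m (n + 1)) atTop (nhds L1) :=
      hmL.comp (tendsto_add_atTop_nat 1)
    have h2 := (key m Mb L1 L4 hmL hMbL (fun n => (hQ n).1)
      (fun n => (hQ n).2.2.2.2.1) hL1mem hL4mem).1
    exact tendsto_nhds_unique (by simpa only [hmrec] using h1) h2
  have heq2 : L2 = f L2 L3 := by
    have h1 : Tendsto (fun n => M (n + 1)) atTop (nhds L2) :=
      hML.comp (tendsto_add_atTop_nat 1)
    have h2 := (key M mb L2 L3 hML hmbL (fun n => (hQ n).2.1)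
      (fun n => (hQ n).2.2.2.1) hL2mem hL3mem).1
    exact tendsto_nhds_unique (by simpa only [hMrec] using h1) h2
  have heq3 : L3 = g L2 L3 := by
    have h1 : Tendsto (fun n => mb (n + 1)) atTop (nhds L3) :=
      hmbL.comp (tendsto_add_atTop_nat 1)
    have h2 := (key M mb L2 L3 hML hmbL (fun n => (hQ n).2.1)
      (fun n => (hQ n).2.2.2.1) hL2mem hL3mem).2
    exact tendsto_nhds_unique (by simpa only [hmbrec] using h1) h2
  have heq4 : L4 = g L1 L4 := by
    have h1 : Tendsto (fun n => Mb (n + 1)) atTop (nhds L4) :=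
      hMbL.comp (tendsto_add_atTop_nat 1)
    have h2 := (key m Mb L1 L4 hmL hMbL (fun n => (hQ n).1)
      (fun n => (hQ n).2.2.2.2.1) hL1mem hL4mem).2
    exact tendsto_nhds_unique (by simpa only [hMbrec] using h1) h2
  obtain ⟨hL12, hL34⟩ := hMm L1 hL1mem L2 hL2mem L3 hL3mem L4 hL4mem heq1 heq2 heq3 heq4
  have hML' : Tendsto M atTop (nhds L1) := by rw [hL12]; exact hML
  have hMbL' : Tendsto Mb atTop (nhds L3) := by rw [hL34]; exact hMbL
  -- Attraction of all orbits
  have hattr : ∀ q ∈ Icc a b ×ˢ Icc c d,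
      Tendsto (fun n => T^[n] q) atTop (nhds ((L1, L3) : ℝ × ℝ)) := by
    intro q hq
    have hrect : ∀ n, T^[n] q ∈ Icc a b ×ˢ Icc c d := by
      intro n
      induction n with
      | zero => exact hq
      | succ n ih =>
        rw [Function.iterate_succ_apply', hT]
        exact ⟨hfmaps _ ih.1 _ ih.2, hgmaps _ ih.1 _ ih.2⟩
    have hbound : ∀ i n, m i ≤ (T^[i + n] q).1 ∧ (T^[i + n] q).1 ≤ M i ∧
        mb i ≤ (T^[i + n] q).2 ∧ (T^[i + n] q).2 ≤ Mb i := by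
      intro i
      induction i with
      | zero =>
        intro n
        obtain ⟨⟨h1, h2⟩, ⟨h3, h4⟩⟩ := hrect (0 + n)
        exact ⟨hm0.le.trans h1, h2.trans hM0.ge, hmb0.le.trans h3, h4.trans hMb0.ge⟩
      | succ i ih =>
        intro n
        have hidx : i + 1 + n = (i + n) + 1 := by omega
        obtain ⟨ih1, ih2, ih3, ih4⟩ := ih n
        obtain ⟨hm, hM, _, hmb, hMb, _⟩ := hQ i
        obtain ⟨hx1, hy1⟩ := hrect (i + n)
        have hTval : T^[i + 1 + n] q =
            (f (T^[i + n] q).1 (T^[i + n] q).2, g (T^[i + n] q).1 (T^[i + n] q).2) := by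
          rw [hidx, Function.iterate_succ_apply', hT]
        refine ⟨?_, ?_, ?_, ?_⟩
        · rw [hTval, hmrec]
          calc f (m i) (Mb i) ≤ f (T^[i + n] q).1 (Mb i) := hfx _ hMb hm hx1 ih1
            _ ≤ f (T^[i + n] q).1 (T^[i + n] q).2 := hfy _ hx1 hy1 hMb ih4
        · rw [hTval, hMrec]
          calc f (T^[i + n] q).1 (T^[i + n] q).2 ≤ f (M i) (T^[i + n] q).2 :=
              hfx _ hy1 hx1 hM ih2
            _ ≤ f (M i) (mb i) := hfy _ hM hmb hy1 ih3
        · rw [hTval, hmbrec]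
          calc g (M i) (mb i) ≤ g (T^[i + n] q).1 (mb i) := hgx _ hmb hx1 hM ih2
            _ ≤ g (T^[i + n] q).1 (T^[i + n] q).2 := hgy _ hx1 hmb hy1 ih3
        · rw [hTval, hMbrec]
          calc g (T^[i + n] q).1 (T^[i + n] q).2 ≤ g (m i) (T^[i + n] q).2 :=
              hgx _ hy1 hm hx1 ih1
            _ ≤ g (m i) (Mb i) := hgy _ hm hy1 hMb ih4
    have hb : ∀ n, m n ≤ (T^[n] q).1 ∧ (T^[n] q).1 ≤ M n ∧
        mb n ≤ (T^[n] q).2 ∧ (T^[n] q).2 ≤ Mb n := by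
      intro n; simpa using hbound n 0
    have hx : Tendsto (fun n => (T^[n] q).1) atTop (nhds L1) :=
      tendsto_of_tendsto_of_tendsto_of_le_of_le hmL hML'
        (fun n => (hb n).1) (fun n => (hb n).2.1)
    have hy : Tendsto (fun n => (T^[n] q).2) atTop (nhds L3) :=
      tendsto_of_tendsto_of_tendsto_of_le_of_le hmbL hMbL'
        (fun n => (hb n).2.2.1) (fun n => (hb n).2.2.2)
    have := hx.prodMk_nhds hy
    simpa using this
  refine ⟨(L1, L3), ⟨hL1mem, hL3mem⟩, ?_, ?_, hattr⟩
  · -- fixed point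
    rw [hT]
    have hf : f L1 L3 = L1 := by rw [hL34]; exact heq1.symm
    have hg : g L1 L3 = L3 := by rw [hL12]; exact heq3.symm
    simp [hf, hg]
  · -- uniqueness
    intro q hq hfix
    have h := hattr q hq
    have h2 : Tendsto (fun _ : ℕ => q) atTop (nhds ((L1, L3) : ℝ × ℝ)) := by
      have : (fun n : ℕ => T^[n] q) = fun _ : ℕ => q := by
        funext n; exact Function.iterate_fixed hfix n
      rwa [this] at h
    exact tendsto_nhds_unique tendsto_const_nhds h2
end

section
/- Let b₁, c₁, h₁, b₂, c₂, h₂ be positive reals satisfying 1 − b₁ + h₁ + c₁·h₂ ≥ 0 and 1 − b₂ + h₂ + c₂·h₁ ≥ 0, and define T on [0,∞)×[0,∞) by T(x,y) = (b₁·x/(1+x+c₁·y) + h₁, b₂·y/(1+y+c₂·x) + h₂). Then T has exactly one fixed point in [0,∞)×[0,∞). -/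
lemma fp_unique18 (b₁ c₁ h₁ b₂ c₂ h₂ x y u v : ℝ)
    (hb₁ : 0 < b₁) (hc₁ : 0 < c₁) (hh₁ : 0 < h₁)
    (hb₂ : 0 < b₂) (hc₂ : 0 < c₂) (hh₂ : 0 < h₂)
    (hcond₁ : 0 ≤ 1 - b₁ + h₁ + c₁ * h₂)
    (hcond₂ : 0 ≤ 1 - b₂ + h₂ + c₂ * h₁)
    (hx : h₁ < x) (hy : h₂ < y) (hu : h₁ < u) (hv : h₂ < v)
    (e1 : (x - h₁) * (1 + x + c₁ * y) = b₁ * x)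
    (e2 : (y - h₂) * (1 + y + c₂ * x) = b₂ * y)
    (e3 : (u - h₁) * (1 + u + c₁ * v) = b₁ * u)
    (e4 : (v - h₂) * (1 + v + c₂ * u) = b₂ * v) :
    x = u ∧ y = v := by
  have hp : 0 < x - h₁ := sub_pos.2 hx
  have hp' : 0 < u - h₁ := sub_pos.2 hu
  have hq : 0 < y - h₂ := sub_pos.2 hy
  have hq' : 0 < v - h₂ := sub_pos.2 hv
  have R1 : c₁ * (v - y) * ((x - h₁) * (u - h₁))
      = (x - u) * ((x - h₁) * (u - h₁) + b₁ * h₁) := by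
    linear_combination (x - h₁) * e3 - (u - h₁) * e1
  have R2 : c₂ * (x - u) * ((y - h₂) * (v - h₂))
      = (v - y) * ((y - h₂) * (v - h₂) + b₂ * h₂) := by
    linear_combination (v - h₂) * e2 - (y - h₂) * e4
  have B1 : c₁ * ((x - h₁) * (y - h₂)) ≤ b₁ * h₁ := by
    nlinarith [mul_nonneg hp.le hcond₁, sq_nonneg (x - h₁)]
  have B2 : c₂ * ((u - h₁) * (v - h₂)) ≤ b₂ * h₂ := by
    nlinarith [mul_nonneg hq'.le hcond₂, sq_nonneg (v - h₂)]
  have hxu : x = u := by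
    by_contra hne
    have hs2 : 0 < (x - u) ^ 2 := pow_two_pos_of_ne_zero (sub_ne_zero.2 hne)
    have hstid : c₁ * ((x - u) * (v - y)) * ((x - h₁) * (u - h₁))
        = (x - u) ^ 2 * ((x - h₁) * (u - h₁) + b₁ * h₁) := by
      linear_combination (x - u) * R1
    have hS : 0 < (x - u) ^ 2 * ((x - h₁) * (u - h₁) + b₁ * h₁) := by positivity
    have hst : 0 < (x - u) * (v - y) := by
      by_contra hle
      push_neg at hle
      have h1 : c₁ * ((x - u) * (v - y)) ≤ 0 :=
        mul_nonpos_of_nonneg_of_nonpos hc₁.le hle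
      have h2 : c₁ * ((x - u) * (v - y)) * ((x - h₁) * (u - h₁)) ≤ 0 :=
        mul_nonpos_of_nonpos_of_nonneg h1 (mul_pos hp hp').le
      linarith [hstid, hS, h2]
    have hmul : ((x - u) * (v - y)) * (c₁ * c₂ * (((x - h₁) * (u - h₁)) * ((y - h₂) * (v - h₂))))
        = ((x - u) * (v - y)) * (((x - h₁) * (u - h₁) + b₁ * h₁) * ((y - h₂) * (v - h₂) + b₂ * h₂)) := by
      linear_combination (c₂ * (x - u) * ((y - h₂) * (v - h₂))) * R1
        + ((x - u) * ((x - h₁) * (u - h₁) + b₁ * h₁)) * R2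
    have hkey : c₁ * c₂ * (((x - h₁) * (u - h₁)) * ((y - h₂) * (v - h₂)))
        = ((x - h₁) * (u - h₁) + b₁ * h₁) * ((y - h₂) * (v - h₂) + b₂ * h₂) :=
      mul_left_cancel₀ hst.ne' hmul
    have hprod : (c₁ * ((x - h₁) * (y - h₂))) * (c₂ * ((u - h₁) * (v - h₂)))
        ≤ (b₁ * h₁) * (b₂ * h₂) :=
      mul_le_mul B1 B2 (by positivity) (by positivity)
    have hE : c₁ * c₂ * (((x - h₁) * (u - h₁)) * ((y - h₂) * (v - h₂)))
        ≤ (b₁ * h₁) * (b₂ * h₂) := by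
      calc c₁ * c₂ * (((x - h₁) * (u - h₁)) * ((y - h₂) * (v - h₂)))
          = (c₁ * ((x - h₁) * (y - h₂))) * (c₂ * ((u - h₁) * (v - h₂))) := by ring
        _ ≤ (b₁ * h₁) * (b₂ * h₂) := hprod
    have hexp : ((x - h₁) * (u - h₁) + b₁ * h₁) * ((y - h₂) * (v - h₂) + b₂ * h₂)
        = ((x - h₁) * (u - h₁)) * ((y - h₂) * (v - h₂))
          + ((x - h₁) * (u - h₁)) * (b₂ * h₂)
          + ((y - h₂) * (v - h₂)) * (b₁ * h₁)
          + (b₁ * h₁) * (b₂ * h₂) := by ring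
    have p1 : 0 < ((x - h₁) * (u - h₁)) * ((y - h₂) * (v - h₂)) :=
      mul_pos (mul_pos hp hp') (mul_pos hq hq')
    have p2 : 0 < ((x - h₁) * (u - h₁)) * (b₂ * h₂) :=
      mul_pos (mul_pos hp hp') (mul_pos hb₂ hh₂)
    have p3 : 0 < ((y - h₂) * (v - h₂)) * (b₁ * h₁) :=
      mul_pos (mul_pos hq hq') (mul_pos hb₁ hh₁)
    linarith
  refine ⟨hxu, ?_⟩
  have h0 : (v - y) * ((y - h₂) * (v - h₂) + b₂ * h₂) = 0 := by
    rw [← R2, hxu]; ring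
  have hfac : 0 < (y - h₂) * (v - h₂) + b₂ * h₂ := by positivity
  rcases mul_eq_zero.1 h0 with h | h
  · linarith
  · linarith


set_option maxHeartbeats 1000000 in
open Set in
lemma fp_exists18 (b₁ c₁ h₁ b₂ c₂ h₂ : ℝ)
    (hb₁ : 0 < b₁) (hc₁ : 0 < c₁) (hh₁ : 0 < h₁)
    (hb₂ : 0 < b₂) (hc₂ : 0 < c₂) (hh₂ : 0 < h₂) :
    ∃ x y : ℝ, h₁ < x ∧ h₂ < y ∧
      (x - h₁) * (1 + x + c₁ * y) = b₁ * x ∧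
      (y - h₂) * (1 + y + c₂ * x) = b₂ * y := by
  have hden : 0 < 2 + h₁ + c₁ * (h₂ + b₂ + 1) := by positivity
  set δ : ℝ := min 1 (b₁ * h₁ / (2 + h₁ + c₁ * (h₂ + b₂ + 1))) with hδdef
  have hδpos : 0 < δ := lt_min one_pos (by positivity)
  have hδ1 : δ ≤ 1 := min_le_left _ _
  have hδ2 : δ * (2 + h₁ + c₁ * (h₂ + b₂ + 1)) ≤ b₁ * h₁ := by
    calc δ * (2 + h₁ + c₁ * (h₂ + b₂ + 1))
        ≤ (b₁ * h₁ / (2 + h₁ + c₁ * (h₂ + b₂ + 1))) * (2 + h₁ + c₁ * (h₂ + b₂ + 1)) :=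
          mul_le_mul_of_nonneg_right (min_le_right _ _) hden.le
      _ = b₁ * h₁ := div_mul_cancel₀ _ hden.ne'
  set a : ℝ := h₁ + δ with hadef
  set bb : ℝ := h₁ + b₁ + b₁ * h₁ + 1 with hbbdef
  have hb₁h₁ : 0 < b₁ * h₁ := mul_pos hb₁ hh₁
  have ha : h₁ < a := by rw [hadef]; linarith
  have ha0 : 0 < a := lt_trans hh₁ ha
  have hab : a ≤ bb := by rw [hadef, hbbdef]; linarith
  set f : ℝ → ℝ := fun x => (b₁ * x / (x - h₁) - 1 - x) / c₁ with hfdef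
  have hcont : ContinuousOn f (Icc a bb) := by
    apply ContinuousOn.div
    · apply ContinuousOn.sub
      · apply ContinuousOn.sub
        · exact ContinuousOn.div (continuous_const.mul continuous_id).continuousOn
            (continuous_id.sub continuous_const).continuousOn
            (fun x hx => sub_ne_zero.2 (ne_of_gt (lt_of_lt_of_le ha hx.1)))
        · exact continuousOn_const
      · exact continuous_id.continuousOn
    · exact continuousOn_const
    · intro x _; exact hc₁.ne'
  have haδ : a - h₁ = δ := by rw [hadef]; ring
  -- f a is large
  have hfa : h₂ + b₂ + 1 ≤ f a := by
    show h₂ + b₂ + 1 ≤ (b₁ * a / (a - h₁) - 1 - a) / c₁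
    rw [haδ, le_div_iff₀ hc₁]
    have hkey : ((h₂ + b₂ + 1) * c₁ + 1 + a) * δ ≤ b₁ * a := by
      rw [hadef]
      nlinarith [hδ2, mul_nonneg (by linarith : (0:ℝ) ≤ 1 - δ) hδpos.le,
        mul_pos hb₁ hδpos]
    have h2 : (h₂ + b₂ + 1) * c₁ + 1 + a ≤ b₁ * a / δ := (le_div_iff₀ hδpos).2 hkey
    linarith
  -- f bb is nonpositive
  have hbbh₁ : 0 < bb - h₁ := by rw [hbbdef]; linarith
  have hfbb : f bb ≤ 0 := by
    show (b₁ * bb / (bb - h₁) - 1 - bb) / c₁ ≤ 0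
    have h1 : b₁ * bb / (bb - h₁) ≤ 1 + bb := by
      rw [div_le_iff₀ hbbh₁]
      rw [hbbdef]
      nlinarith [mul_pos hb₁ hh₁, mul_pos (mul_pos hb₁ hb₁) hh₁, sq_nonneg b₁]
    exact div_nonpos_of_nonpos_of_nonneg (by linarith) hc₁.le
  -- first IVT: find x₀ with f x₀ = 0
  obtain ⟨x₀, hx₀, hfx₀⟩ := intermediate_value_Icc' hab hcont
    (show (0:ℝ) ∈ Icc (f bb) (f a) from ⟨hfbb, by linarith [hfa]⟩)
  have hx₀h₁ : h₁ < x₀ := lt_of_lt_of_le ha hx₀.1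
  have hx₀0 : 0 < x₀ := lt_trans hh₁ hx₀h₁
  -- second curve function
  set g : ℝ → ℝ := fun x => (f x - h₂) * (1 + f x + c₂ * x) - b₂ * f x with hgdef
  have hcontg : ContinuousOn g (Icc a x₀) := by
    have hf' : ContinuousOn f (Icc a x₀) := hcont.mono (Icc_subset_Icc le_rfl hx₀.2)
    exact ((hf'.sub continuousOn_const).mul
      ((continuousOn_const.add hf').add (continuousOn_const.mul continuousOn_id))).sub
      (continuousOn_const.mul hf')
  have hga : 0 < g a := by
    show 0 < (f a - h₂) * (1 + f a + c₂ * a) - b₂ * f a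
    nlinarith [mul_nonneg (by linarith : (0:ℝ) ≤ f a - h₂) (mul_nonneg hc₂.le ha0.le),
      mul_nonneg (by linarith : (0:ℝ) ≤ f a) (by linarith : (0:ℝ) ≤ f a - (h₂ + b₂ + 1))]
  have hgx₀ : g x₀ < 0 := by
    show (f x₀ - h₂) * (1 + f x₀ + c₂ * x₀) - b₂ * f x₀ < 0
    rw [hfx₀]
    nlinarith [mul_pos hc₂ hx₀0, hh₂]
  -- second IVT: find xs with g xs = 0
  obtain ⟨xs, hxs, hgxs⟩ := intermediate_value_Icc' hx₀.1 hcontg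
    (show (0:ℝ) ∈ Icc (g x₀) (g a) from ⟨hgx₀.le, hga.le⟩)
  have hxsh₁ : h₁ < xs := lt_of_lt_of_le ha hxs.1
  have hxspos : 0 < xs := lt_trans hh₁ hxsh₁
  have hdpos : 0 < xs - h₁ := sub_pos.2 hxsh₁
  have hd₀pos : 0 < x₀ - h₁ := sub_pos.2 hx₀h₁
  -- equation from f x₀ = 0
  have ek0 : b₁ * x₀ = (1 + x₀) * (x₀ - h₁) := by
    have h' : (b₁ * x₀ / (x₀ - h₁) - 1 - x₀) / c₁ = 0 := hfx₀
    field_simp at h'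
    linarith [h']
  -- concavity: the quadratic is nonnegative on [h₁, x₀]
  have hkeyq : (1 + xs) * (xs - h₁) ≤ b₁ * xs := by
    have hid : (b₁ * xs - (1 + xs) * (xs - h₁)) * x₀
        = (x₀ - xs) * (xs * x₀ + h₁) + xs * (b₁ * x₀ - (1 + x₀) * (x₀ - h₁)) := by ring
    have h2 : b₁ * x₀ - (1 + x₀) * (x₀ - h₁) = 0 := by linarith [ek0]
    have h3 : 0 ≤ (x₀ - xs) * (xs * x₀ + h₁) :=
      mul_nonneg (sub_nonneg.2 hxs.2) (by positivity)
    nlinarith [hid, h3, hx₀0]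
  -- value ys := f xs is nonnegative
  have hfxs0 : 0 ≤ f xs := by
    have h1 : (1 + xs) ≤ b₁ * xs / (xs - h₁) := (le_div_iff₀ hdpos).2 (by linarith)
    show 0 ≤ (b₁ * xs / (xs - h₁) - 1 - xs) / c₁
    exact div_nonneg (by linarith) hc₁.le
  have hys : c₁ * f xs = b₁ * xs / (xs - h₁) - 1 - xs := by
    show c₁ * ((b₁ * xs / (xs - h₁) - 1 - xs) / c₁) = _
    field_simp
  have e1poly : (xs - h₁) * (1 + xs + c₁ * f xs) = b₁ * xs := by
    rw [show (1 : ℝ) + xs + c₁ * f xs = b₁ * xs / (xs - h₁) by rw [hys]; ring]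
    field_simp
  have e2poly : (f xs - h₂) * (1 + f xs + c₂ * xs) = b₂ * f xs := by
    have h' : (f xs - h₂) * (1 + f xs + c₂ * xs) - b₂ * f xs = 0 := hgxs
    linarith
  have hysh₂ : h₂ < f xs := by
    by_contra hle
    push_neg at hle
    have h1 : 0 ≤ h₂ - f xs := by linarith
    have h2 : 0 ≤ f xs + c₂ * xs := by
      have := mul_nonneg hc₂.le hxspos.le; linarith
    have h3 : 0 ≤ (h₂ - f xs) * (f xs + c₂ * xs) := mul_nonneg h1 h2
    have h4 : b₂ * f xs ≤ f xs - h₂ := by nlinarith [e2poly, h3]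
    have h5 : 0 ≤ b₂ * f xs := mul_nonneg hb₂.le hfxs0
    have h6 : f xs = h₂ := by linarith
    rw [h6] at h4
    nlinarith [mul_pos hb₂ hh₂]
  exact ⟨xs, f xs, hxsh₁, hysh₂, e1poly, e2poly⟩

open Set in
/-- If `1 − b₁ + h₁ + c₁h₂ ≥ 0` and `1 − b₂ + h₂ + c₂h₁ ≥ 0`, then the map
`T(x,y) = (b₁x/(1+x+c₁y)+h₁, b₂y/(1+y+c₂x)+h₂)` has exactly one fixed point
in `[0,∞)×[0,∞)`. -/
theorem stmt18 (b₁ c₁ h₁ b₂ c₂ h₂ : ℝ)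
    (hb₁ : 0 < b₁) (hc₁ : 0 < c₁) (hh₁ : 0 < h₁)
    (hb₂ : 0 < b₂) (hc₂ : 0 < c₂) (hh₂ : 0 < h₂)
    (hcond₁ : 0 ≤ 1 - b₁ + h₁ + c₁ * h₂)
    (hcond₂ : 0 ≤ 1 - b₂ + h₂ + c₂ * h₁)
    (T : ℝ × ℝ → ℝ × ℝ)
    (hT : ∀ x y, T (x, y) =
      (b₁ * x / (1 + x + c₁ * y) + h₁, b₂ * y / (1 + y + c₂ * x) + h₂)) :
    ∃! p : ℝ × ℝ, p ∈ Ici (0:ℝ) ×ˢ Ici (0:ℝ) ∧ T p = p := by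
  obtain ⟨xs, ys, hxsh₁, hysh₂, e1poly, e2poly⟩ :=
    fp_exists18 b₁ c₁ h₁ b₂ c₂ h₂ hb₁ hc₁ hh₁ hb₂ hc₂ hh₂
  have hxspos : 0 < xs := lt_trans hh₁ hxsh₁
  have hyspos : 0 < ys := lt_trans hh₂ hysh₂
  refine ⟨(xs, ys), ⟨⟨hxspos.le, hyspos.le⟩, ?_⟩, ?_⟩
  · -- fixed point
    rw [hT xs ys]
    have hD1 : 0 < 1 + xs + c₁ * ys := by
      have := mul_nonneg hc₁.le hyspos.le; linarith
    have hD2 : 0 < 1 + ys + c₂ * xs := by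
      have := mul_nonneg hc₂.le hxspos.le; linarith
    have hA : b₁ * xs / (1 + xs + c₁ * ys) = xs - h₁ := by
      rw [div_eq_iff hD1.ne']; linear_combination -e1poly
    have hB : b₂ * ys / (1 + ys + c₂ * xs) = ys - h₂ := by
      rw [div_eq_iff hD2.ne']; linear_combination -e2poly
    rw [Prod.mk.injEq]
    constructor
    · rw [hA]; ring
    · rw [hB]; ring
  · -- uniqueness
    rintro ⟨qx, qy⟩ ⟨hmem, hfix⟩
    have hqx0 : 0 ≤ qx := hmem.1
    have hqy0 : 0 ≤ qy := hmem.2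
    rw [hT qx qy, Prod.mk.injEq] at hfix
    obtain ⟨E1, E2⟩ := hfix
    have hD1 : 0 < 1 + qx + c₁ * qy := by
      have := mul_nonneg hc₁.le hqy0; linarith
    have hD2 : 0 < 1 + qy + c₂ * qx := by
      have := mul_nonneg hc₂.le hqx0; linarith
    have hq1 : h₁ < qx := by
      have h0 : 0 ≤ b₁ * qx / (1 + qx + c₁ * qy) :=
        div_nonneg (mul_nonneg hb₁.le hqx0) hD1.le
      have hqxpos : 0 < qx := by linarith
      have : 0 < b₁ * qx / (1 + qx + c₁ * qy) := div_pos (mul_pos hb₁ hqxpos) hD1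
      linarith
    have hq2 : h₂ < qy := by
      have h0 : 0 ≤ b₂ * qy / (1 + qy + c₂ * qx) :=
        div_nonneg (mul_nonneg hb₂.le hqy0) hD2.le
      have hqypos : 0 < qy := by linarith
      have : 0 < b₂ * qy / (1 + qy + c₂ * qx) := div_pos (mul_pos hb₂ hqypos) hD2
      linarith
    have eq1q : (qx - h₁) * (1 + qx + c₁ * qy) = b₁ * qx := by
      have h' : b₁ * qx / (1 + qx + c₁ * qy) = qx - h₁ := by linarith
      rw [div_eq_iff hD1.ne'] at h'
      linear_combination -h'
    have eq2q : (qy - h₂) * (1 + qy + c₂ * qx) = b₂ * qy := by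
      have h' : b₂ * qy / (1 + qy + c₂ * qx) = qy - h₂ := by linarith
      rw [div_eq_iff hD2.ne'] at h'
      linear_combination -h'
    obtain ⟨hx', hy'⟩ := fp_unique18 b₁ c₁ h₁ b₂ c₂ h₂ qx qy xs ys
      hb₁ hc₁ hh₁ hb₂ hc₂ hh₂ hcond₁ hcond₂ hq1 hq2 hxsh₁ hysh₂
      eq1q eq2q e1poly e2poly
    exact Prod.ext hx' hy'
end

section
/- Let b₁, c₁, h₁, b₂, c₂, h₂ be positive reals satisfying c₁·c₂ ≤ 1, and define T on [0,∞)×[0,∞) by T(x,y) = (b₁·x/(1+x+c₁·y) + h₁, b₂·y/(1+y+c₂·x) + h₂). Then T has exactly one fixed point in [0,∞)×[0,∞). -/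
noncomputable def phiAux (b₁ c₁ h₁ : ℝ) : ℝ → ℝ :=
  fun x => (b₁ * x / (x - h₁) - 1 - x) / c₁

lemma phiAux_contOn (b₁ c₁ h₁ : ℝ) (hc₁ : c₁ ≠ 0) (s : Set ℝ)
    (hs : ∀ x ∈ s, x ≠ h₁) : ContinuousOn (phiAux b₁ c₁ h₁) s := by
  apply ContinuousOn.div _ continuousOn_const (fun x _ => hc₁)
  refine ContinuousOn.sub (ContinuousOn.sub ?_ continuousOn_const) continuousOn_id
  exact ContinuousOn.div (continuous_const.mul continuous_id).continuousOn
    (continuous_id.sub continuous_const).continuousOn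
    (fun x hx => sub_ne_zero.mpr (hs x hx))

lemma phiAux_anti (b₁ c₁ h₁ : ℝ) (hb₁ : 0 < b₁) (hc₁ : 0 < c₁) (hh₁ : 0 < h₁)
    {u v : ℝ} (hu : h₁ < u) (huv : u ≤ v) :
    phiAux b₁ c₁ h₁ v ≤ phiAux b₁ c₁ h₁ u := by
  have h1 : 0 < u - h₁ := by linarith
  have h2 : 0 < v - h₁ := by linarith
  have key : b₁ * v / (v - h₁) ≤ b₁ * u / (u - h₁) := by
    rw [div_le_div_iff₀ h2 h1]
    nlinarith [mul_nonneg (mul_nonneg hb₁.le hh₁.le) (sub_nonneg.mpr huv)]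
  simp only [phiAux]
  exact (div_le_div_iff_of_pos_right hc₁).mpr (by linarith)

/-- From the fixed-point equation in one coordinate, derive `h₁ < x` and the
polynomial equation. -/
lemma fp_coord (b₁ c₁ h₁ : ℝ) (hb₁ : 0 < b₁) (hc₁ : 0 < c₁) (hh₁ : 0 < h₁)
    (x y : ℝ) (hx : 0 ≤ x) (hy : 0 ≤ y)
    (h : b₁ * x / (1 + x + c₁ * y) + h₁ = x) :
    h₁ < x ∧ (x - h₁) * (1 + x + c₁ * y) = b₁ * x := by
  have hd : 0 < 1 + x + c₁ * y := by positivity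
  have h1 : x - h₁ = b₁ * x / (1 + x + c₁ * y) := by linarith
  have hxh : h₁ ≤ x := by
    have : 0 ≤ b₁ * x / (1 + x + c₁ * y) := by positivity
    linarith
  have hxpos : 0 < x := lt_of_lt_of_le hh₁ hxh
  have hlt : h₁ < x := by
    have : 0 < b₁ * x / (1 + x + c₁ * y) := by positivity
    linarith
  refine ⟨hlt, ?_⟩
  rw [h1, div_mul_cancel₀ _ (ne_of_gt hd)]

/-- Uniqueness of the solution of the polynomial system. -/
lemma fp_uniq (b₁ c₁ h₁ b₂ c₂ h₂ x₁ y₁ x₂ y₂ : ℝ)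
    (hb₁ : 0 < b₁) (hc₁ : 0 < c₁) (hh₁ : 0 < h₁)
    (hb₂ : 0 < b₂) (hc₂ : 0 < c₂) (hh₂ : 0 < h₂)
    (hcond : c₁ * c₂ ≤ 1)
    (hx₁ : h₁ < x₁) (hy₁ : h₂ < y₁) (hx₂ : h₁ < x₂) (hy₂ : h₂ < y₂)
    (e11 : (x₁ - h₁) * (1 + x₁ + c₁ * y₁) = b₁ * x₁)
    (e21 : (y₁ - h₂) * (1 + y₁ + c₂ * x₁) = b₂ * y₁)
    (e12 : (x₂ - h₁) * (1 + x₂ + c₁ * y₂) = b₁ * x₂)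
    (e22 : (y₂ - h₂) * (1 + y₂ + c₂ * x₂) = b₂ * y₂) :
    x₁ = x₂ ∧ y₁ = y₂ := by
  have E1 : c₁ * (y₂ - y₁) * ((x₁ - h₁) * (x₂ - h₁))
      = (x₁ - x₂) * (b₁ * h₁ + (x₁ - h₁) * (x₂ - h₁)) := by
    linear_combination (x₁ - h₁) * e12 - (x₂ - h₁) * e11
  have E2 : c₂ * (x₂ - x₁) * ((y₁ - h₂) * (y₂ - h₂))
      = (y₁ - y₂) * (b₂ * h₂ + (y₁ - h₂) * (y₂ - h₂)) := by
    linear_combination (y₁ - h₂) * e22 - (y₂ - h₂) * e21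
  set P := (x₁ - h₁) * (x₂ - h₁) with hP
  set Q := (y₁ - h₂) * (y₂ - h₂) with hQ
  clear_value P Q
  clear e11 e12 e21 e22
  have hPpos : 0 < P := by rw [hP]; exact mul_pos (by linarith) (by linarith)
  have hQpos : 0 < Q := by rw [hQ]; exact mul_pos (by linarith) (by linarith)
  rcases eq_or_ne x₁ x₂ with hx | hx
  · refine ⟨hx, ?_⟩
    rw [hx] at E1
    simp only [sub_self, zero_mul] at E1
    rcases mul_eq_zero.mp E1 with h | h
    · rcases mul_eq_zero.mp h with h' | h'
      · exact absurd h' (ne_of_gt hc₁)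
      · linarith
    · exact absurd h (ne_of_gt hPpos)
  · exfalso
    have hApos : 0 < b₁ * h₁ + P := by positivity
    have hBpos : 0 < b₂ * h₂ + Q := by positivity
    set dx := x₂ - x₁ with hdx
    set dy := y₂ - y₁ with hdy
    have hdxne : dx ≠ 0 := sub_ne_zero.mpr (Ne.symm hx)
    have hdx2 : 0 < dx * dx := mul_self_pos.mpr hdxne
    have hE1' : c₁ * (dx * dy) * P = -(dx * dx) * (b₁ * h₁ + P) := by
      linear_combination dx * E1
    have hsign : dx * dy < 0 := by
      nlinarith [mul_pos hdx2 hApos, mul_pos hc₁ hPpos]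
    have hprod : c₁ * c₂ * (dx * dy) * (P * Q)
        = (dx * dy) * ((b₁ * h₁ + P) * (b₂ * h₂ + Q)) := by
      linear_combination (c₂ * dx * Q) * E1 - (dx * (b₁ * h₁ + P)) * E2
    have hPQ : 0 < P * Q := mul_pos hPpos hQpos
    have h1 : P * Q < (b₁ * h₁ + P) * (b₂ * h₂ + Q) := by
      nlinarith [mul_pos (mul_pos hb₁ hh₁) (mul_pos hb₂ hh₂),
        mul_pos (mul_pos hb₁ hh₁) hQpos, mul_pos (mul_pos hb₂ hh₂) hPpos]
    have h2 : c₁ * c₂ * (P * Q) ≤ P * Q := by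
      nlinarith [mul_le_mul_of_nonneg_right hcond hPQ.le]
    have hpos : 0 < (b₁ * h₁ + P) * (b₂ * h₂ + Q) - c₁ * c₂ * (P * Q) := by linarith
    have hkey : dx * dy * ((b₁ * h₁ + P) * (b₂ * h₂ + Q) - c₁ * c₂ * (P * Q)) = 0 := by
      linear_combination -hprod
    have := mul_neg_of_neg_of_pos hsign hpos
    linarith

open Set in
/-- If `c₁·c₂ ≤ 1`, then the map
`T(x,y) = (b₁x/(1+x+c₁y)+h₁, b₂y/(1+y+c₂x)+h₂)` has exactly one fixed point
in `[0,∞)×[0,∞)`. -/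
theorem stmt19 (b₁ c₁ h₁ b₂ c₂ h₂ : ℝ)
    (hb₁ : 0 < b₁) (hc₁ : 0 < c₁) (hh₁ : 0 < h₁)
    (hb₂ : 0 < b₂) (hc₂ : 0 < c₂) (hh₂ : 0 < h₂)
    (hcond : c₁ * c₂ ≤ 1)
    (T : ℝ × ℝ → ℝ × ℝ)
    (hT : ∀ x y, T (x, y) =
      (b₁ * x / (1 + x + c₁ * y) + h₁, b₂ * y / (1 + y + c₂ * x) + h₂)) :
    ∃! p : ℝ × ℝ, p ∈ Ici (0:ℝ) ×ˢ Ici (0:ℝ) ∧ T p = p := by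
  set φ := phiAux b₁ c₁ h₁ with hφdef
  -- endpoints for the IVT
  set M : ℝ := (h₂ + b₂) * c₁ + 2 + h₁ with hM
  have hMpos : 0 < M := by positivity
  set δ : ℝ := min 1 (b₁ * h₁ / M) with hδ
  have hδpos : 0 < δ := lt_min one_pos (by positivity)
  have hδ1 : δ ≤ 1 := min_le_left _ _
  have hδM : δ * M ≤ b₁ * h₁ := by
    have h := min_le_right 1 (b₁ * h₁ / M)
    calc δ * M ≤ b₁ * h₁ / M * M := mul_le_mul_of_nonneg_right h hMpos.le
    _ = b₁ * h₁ := div_mul_cancel₀ _ (ne_of_gt hMpos)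
  set a : ℝ := h₁ + δ with ha
  have hah : h₁ < a := by rw [ha]; linarith
  have hapos : 0 < a := lt_trans hh₁ hah
  have haδ : a - h₁ = δ := by rw [ha]; ring
  have hφa : h₂ + b₂ ≤ φ a := by
    rw [hφdef]
    simp only [phiAux]
    rw [le_div_iff₀ hc₁, haδ]
    have key : ((h₂ + b₂) * c₁ + 1 + a) * δ ≤ b₁ * a := by
      calc ((h₂ + b₂) * c₁ + 1 + a) * δ ≤ M * δ := by
            apply mul_le_mul_of_nonneg_right _ hδpos.le
            rw [hM, ha]; linarith
        _ = δ * M := mul_comm _ _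
        _ ≤ b₁ * h₁ := hδM
        _ ≤ b₁ * a := by nlinarith [mul_pos hb₁ hδpos]
    have hba : (h₂ + b₂) * c₁ + 1 + a ≤ b₁ * a / δ := by
      rw [le_div_iff₀ hδpos]; exact key
    linarith
  set bb : ℝ := h₁ + 1 + b₁ + b₁ * h₁ + c₁ * h₂ with hbb
  have hab : a ≤ bb := by
    rw [ha, hbb]
    nlinarith [mul_pos hb₁ hh₁, mul_pos hc₁ hh₂]
  have hbbh : 1 ≤ bb - h₁ := by
    rw [hbb]; nlinarith [mul_pos hb₁ hh₁, mul_pos hc₁ hh₂]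
  have hφb : φ bb ≤ h₂ := by
    rw [hφdef]; simp only [phiAux]
    rw [div_le_iff₀ hc₁]
    have h2 : b₁ * bb / (bb - h₁) ≤ b₁ + b₁ * h₁ := by
      rw [div_le_iff₀ (by linarith : (0:ℝ) < bb - h₁), hbb]
      nlinarith [mul_pos hb₁ hh₁, mul_pos hc₁ hh₂,
        mul_pos (mul_pos hb₁ hh₁) hb₁, mul_pos (mul_pos hb₁ hh₁) (mul_pos hb₁ hh₁),
        mul_pos (mul_pos hb₁ hh₁) (mul_pos hc₁ hh₂)]
    nlinarith [mul_pos hc₁ hh₂, mul_pos hb₁ hh₁]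
  -- first IVT: find x̄ with φ x̄ = h₂
  have hcont : ContinuousOn φ (Icc a bb) :=
    phiAux_contOn b₁ c₁ h₁ (ne_of_gt hc₁) _
      (fun x hx => ne_of_gt (lt_of_lt_of_le hah hx.1))
  have h₂mem : h₂ ∈ Icc (φ bb) (φ a) := ⟨hφb, by linarith⟩
  obtain ⟨xbar, hxbarmem, hxbar⟩ := intermediate_value_Icc' hab hcont h₂mem
  have haxbar : a ≤ xbar := hxbarmem.1
  -- second IVT on K
  set K : ℝ → ℝ := fun x => (φ x - h₂) * (1 + φ x + c₂ * x) - b₂ * φ x with hK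
  have hKcont : ContinuousOn K (Icc a xbar) := by
    have hsub : Icc a xbar ⊆ Icc a bb := Icc_subset_Icc le_rfl hxbarmem.2
    have hφc : ContinuousOn φ (Icc a xbar) := hcont.mono hsub
    apply ContinuousOn.sub
    · exact ContinuousOn.mul (hφc.sub continuousOn_const)
        ((continuousOn_const.add hφc).add
          (continuous_const.mul continuous_id).continuousOn)
    · exact continuousOn_const.mul hφc
  have hKa : 0 < K a := by
    have h2 : b₂ ≤ φ a - h₂ := by linarith
    have hphia : 0 < φ a := by linarith
    have h3 : (0:ℝ) < 1 + φ a + c₂ * a := by positivity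
    simp only [hK]
    nlinarith [mul_le_mul_of_nonneg_right h2 h3.le, mul_pos (mul_pos hb₂ hc₂) hapos]
  have hKxbar : K xbar < 0 := by
    have : K xbar = -(b₂ * h₂) := by simp only [hK]; rw [hxbar]; ring
    rw [this]
    nlinarith [mul_pos hb₂ hh₂]
  have h0mem : (0:ℝ) ∈ Icc (K xbar) (K a) := ⟨hKxbar.le, hKa.le⟩
  obtain ⟨x₀, hx₀mem, hx₀⟩ := intermediate_value_Icc' haxbar hKcont h0mem
  set y₀ := φ x₀ with hy₀
  have hx₀h : h₁ < x₀ := lt_of_lt_of_le hah hx₀mem.1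
  have hx₀pos : 0 < x₀ := lt_trans hh₁ hx₀h
  have hy₀h : h₂ ≤ y₀ := by
    rw [← hxbar, hy₀, hφdef]
    exact phiAux_anti b₁ c₁ h₁ hb₁ hc₁ hh₁ hx₀h hx₀mem.2
  have hy₀pos : 0 < y₀ := lt_of_lt_of_le hh₂ hy₀h
  -- the fixed point equations for (x₀, y₀)
  have hmne : x₀ - h₁ ≠ 0 := ne_of_gt (by linarith)
  have hcy : c₁ * y₀ = b₁ * x₀ / (x₀ - h₁) - 1 - x₀ := by
    rw [hy₀, hφdef]; simp only [phiAux]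
    rw [mul_comm, div_mul_cancel₀ _ (ne_of_gt hc₁)]
  have e1 : (x₀ - h₁) * (1 + x₀ + c₁ * y₀) = b₁ * x₀ := by
    rw [hcy]; field_simp; ring
  have e2 : (y₀ - h₂) * (1 + y₀ + c₂ * x₀) = b₂ * y₀ := by
    have h := hx₀
    simp only [hK] at h
    linarith
  have hd1 : (0:ℝ) < 1 + x₀ + c₁ * y₀ := by positivity
  have hd2 : (0:ℝ) < 1 + y₀ + c₂ * x₀ := by positivity
  have hfix1 : b₁ * x₀ / (1 + x₀ + c₁ * y₀) + h₁ = x₀ := by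
    have : b₁ * x₀ / (1 + x₀ + c₁ * y₀) = x₀ - h₁ := by
      rw [div_eq_iff (ne_of_gt hd1)]; linear_combination -e1
    rw [this]; ring
  have hfix2 : b₂ * y₀ / (1 + y₀ + c₂ * x₀) + h₂ = y₀ := by
    have : b₂ * y₀ / (1 + y₀ + c₂ * x₀) = y₀ - h₂ := by
      rw [div_eq_iff (ne_of_gt hd2)]; linear_combination -e2
    rw [this]; ring
  -- strict inequality h₂ < y₀ via fp_coord
  have hy₀strict : h₂ < y₀ :=
    (fp_coord b₂ c₂ h₂ hb₂ hc₂ hh₂ y₀ x₀ hy₀pos.le hx₀pos.le hfix2).1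
  refine ⟨(x₀, y₀), ⟨⟨hx₀pos.le, hy₀pos.le⟩, ?_⟩, ?_⟩
  · rw [hT x₀ y₀, hfix1, hfix2]
  · rintro ⟨u, v⟩ ⟨⟨hu, hv⟩, hfix⟩
    simp only [mem_Ici] at hu hv
    rw [hT u v] at hfix
    have hf1 : b₁ * u / (1 + u + c₁ * v) + h₁ = u := congrArg Prod.fst hfix
    have hf2 : b₂ * v / (1 + v + c₂ * u) + h₂ = v := congrArg Prod.snd hfix
    obtain ⟨hu1, hu2⟩ := fp_coord b₁ c₁ h₁ hb₁ hc₁ hh₁ u v hu hv hf1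
    obtain ⟨hv1, hv2⟩ := fp_coord b₂ c₂ h₂ hb₂ hc₂ hh₂ v u hv hu hf2
    obtain ⟨hxeq, hyeq⟩ := fp_uniq b₁ c₁ h₁ b₂ c₂ h₂ u v x₀ y₀
      hb₁ hc₁ hh₁ hb₂ hc₂ hh₂ hcond hu1 hv1 hx₀h hy₀strict hu2 hv2 e1 e2
    exact Prod.ext hxeq hyeq
end
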